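/- arXiv:2302.00643 — 11 statements merged into one kernel-verified Lean document; each statement's English description precedes it below -/
import Mathlib

section
/- Let n ≥ 1, k ≥ 1, and let A_1, …, A_k be real symmetric n×n matrices. There exist real numbers c_1, …, c_k such that the linear combination Σ_{i=1}^k c_i·A_i is a nonzero positive semidefinite matrix if and only if there is no X ∈ 𝒫(n) satisfying tr(A_i·X) = 0 for all i = 1, …, k (i.e. the intersection A_1^⊥ ∩ ⋯ ∩ A_k^⊥ in 𝒫(n) is empty). -/
open Matrix

namespace SDPAux
variable {n : ℕ}


lemma psd_diag_nonneg {M : Matrix (Fin n) (Fin n) ℝ} (h : M.PosSemidef) (i : Fin n) :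
    0 ≤ M i i := by
  simpa [mulVec_single_one] using h.dotProduct_mulVec_nonneg (Pi.single i 1)

lemma psd_trace_eq_zero {M : Matrix (Fin n) (Fin n) ℝ} (h : M.PosSemidef)
    (ht : M.trace = 0) : M = 0 := by
  have hd : ∀ i, M i i = 0 := by
    intro i
    exact (Finset.sum_eq_zero_iff_of_nonneg (fun i _ => psd_diag_nonneg h i)).mp ht i
      (Finset.mem_univ i)
  ext r j
  have h0 : M *ᵥ Pi.single j 1 = 0 := by
    rw [← h.dotProduct_mulVec_zero_iff]
    simpa [mulVec_single_one] using hd j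
  have := congrFun h0 r
  simpa [mulVec_single_one] using this

lemma psd_posdef_trace {B X : Matrix (Fin n) (Fin n) ℝ} (hB : B.PosSemidef) (hX : X.PosDef)
    (h : (B * X).trace = 0) : B = 0 := by
  obtain ⟨L, rfl⟩ : ∃ L : Matrix (Fin n) (Fin n) ℝ, B = Lᴴ * L := by
    open MatrixOrder in exact CStarAlgebra.nonneg_iff_eq_star_mul_self.mp hB.nonneg
  have h1 : (L * X * Lᴴ).trace = 0 := by
    rw [trace_mul_comm, ← Matrix.mul_assoc]; exact h
  have hz := psd_trace_eq_zero (hX.posSemidef.mul_mul_conjTranspose_same L) h1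
  have hL : L = 0 := by
    ext i a
    have hrow : L i = 0 := by
      by_contra hne
      have hpos := hX.dotProduct_mulVec_pos hne
      have key : (L * X * Lᴴ) i i = star (L i) ⬝ᵥ X *ᵥ (L i) := by
        simp only [mul_apply, conjTranspose_apply, dotProduct, mulVec, star_trivial,
          Finset.sum_mul, Finset.mul_sum]
        rw [Finset.sum_comm]
        exact Finset.sum_congr rfl fun b _ => Finset.sum_congr rfl fun c _ => by ring
      rw [hz] at key
      simp only [Matrix.zero_apply] at key
      rw [← key] at hpos
      exact lt_irrefl _ hpos
    exact congrFun hrow a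
  rw [hL]
  simp



noncomputable def toEuc : Matrix (Fin n) (Fin n) ℝ ≃ₗ[ℝ] EuclideanSpace ℝ (Fin n × Fin n) where
  toFun M := (WithLp.equiv 2 _).symm fun p => M p.1 p.2
  invFun x := Matrix.of fun i j => (WithLp.equiv 2 _) x (i, j)
  map_add' _ _ := rfl
  map_smul' _ _ := rfl
  left_inv _ := rfl
  right_inv _ := rfl

def quadF (v : Fin n → ℝ) : Matrix (Fin n) (Fin n) ℝ →ₗ[ℝ] ℝ where
  toFun M := v ⬝ᵥ M *ᵥ v
  map_add' M N := by simp [add_mulVec, dotProduct_add]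
  map_smul' c M := by simp [smul_mulVec, dotProduct_smul]

def entryD (i j : Fin n) : Matrix (Fin n) (Fin n) ℝ →ₗ[ℝ] ℝ where
  toFun M := M i j - M j i
  map_add' M N := by simp [Matrix.add_apply]; ring
  map_smul' c M := by simp [Matrix.smul_apply, smul_eq_mul]; ring

-- the compact convex set K
noncomputable def KK (n : ℕ) : Set (EuclideanSpace ℝ (Fin n × Fin n)) :=
  {x | (∀ i j : Fin n, (toEuc.symm x) i j = (toEuc.symm x) j i) ∧
       (∀ v : Fin n → ℝ, 0 ≤ v ⬝ᵥ (toEuc.symm x) *ᵥ v) ∧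
       (toEuc.symm x).trace = 1}

lemma KK_closed : IsClosed (KK n) := by
  have hK : KK n =
      (⋂ i : Fin n, ⋂ j : Fin n,
        {x | ((entryD i j).comp toEuc.symm.toLinearMap) x = 0}) ∩
      ((⋂ v : Fin n → ℝ, {x | 0 ≤ ((quadF v).comp toEuc.symm.toLinearMap) x}) ∩
       {x | ((Matrix.traceLinearMap (Fin n) ℝ ℝ).comp toEuc.symm.toLinearMap) x = 1}) := by
    ext x
    simp only [KK, Set.mem_setOf_eq, Set.mem_inter_iff, Set.mem_iInter, LinearMap.coe_comp,
      Function.comp_apply, LinearEquiv.coe_toLinearMap, entryD, quadF, LinearMap.coe_mk,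
      AddHom.coe_mk, Matrix.traceLinearMap_apply, sub_eq_zero]
  rw [hK]
  have hcont : ∀ (g : Matrix (Fin n) (Fin n) ℝ →ₗ[ℝ] ℝ),
      Continuous ((g.comp toEuc.symm.toLinearMap : _ →ₗ[ℝ] ℝ)) := fun g =>
    LinearMap.continuous_of_finiteDimensional _
  refine IsClosed.inter ?_ (IsClosed.inter ?_ ?_)
  · exact isClosed_iInter fun i => isClosed_iInter fun j =>
      isClosed_eq (hcont _) continuous_const
  · exact isClosed_iInter fun v => isClosed_le continuous_const (hcont _)
  · exact isClosed_eq (hcont _) continuous_const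

lemma KK_convex : Convex ℝ (KK n) := by
  intro x hx y hy a b ha hb hab
  obtain ⟨hs1, hq1, ht1⟩ := hx
  obtain ⟨hs2, hq2, ht2⟩ := hy
  have hmap : toEuc.symm (a • x + b • y) =
      a • (toEuc.symm x : Matrix (Fin n) (Fin n) ℝ) + b • toEuc.symm y := by
    simp [map_add, _root_.map_smul]
  refine ⟨?_, ?_, ?_⟩
  · intro i j
    simp only [hmap, Matrix.add_apply, Matrix.smul_apply, smul_eq_mul]
    rw [hs1 i j, hs2 i j]
  · intro v
    simp only [hmap, add_mulVec, smul_mulVec, dotProduct_add, dotProduct_smul,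
      smul_eq_mul]
    exact add_nonneg (mul_nonneg ha (hq1 v)) (mul_nonneg hb (hq2 v))
  · simp only [hmap, trace_add, trace_smul, ht1, ht2, smul_eq_mul, mul_one]
    exact hab



lemma quad_pair (M : Matrix (Fin n) (Fin n) ℝ) (i j : Fin n) (c : ℝ) :
    (((Pi.single i 1 : Fin n → ℝ) + c • (Pi.single j 1 : Fin n → ℝ))) ⬝ᵥ
        M *ᵥ (((Pi.single i 1 : Fin n → ℝ) + c • (Pi.single j 1 : Fin n → ℝ))) =
      M i i + c * M i j + c * M j i + c * c * M j j := by
  simp only [mulVec_add, Matrix.mulVec_smul, add_dotProduct, dotProduct_add, smul_dotProduct,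
    dotProduct_smul, mulVec_single_one, single_one_dotProduct, smul_eq_mul, Pi.smul_apply, Matrix.transpose_apply, Matrix.col_apply]
  ring

lemma entry_bound {M : Matrix (Fin n) (Fin n) ℝ}
    (hsym : ∀ i j, M i j = M j i) (hq : ∀ v : Fin n → ℝ, 0 ≤ v ⬝ᵥ M *ᵥ v)
    (ht : M.trace = 1) (i j : Fin n) : |M i j| ≤ 1 := by
  have hdiag : ∀ a, 0 ≤ M a a := by
    intro a
    have := hq ((Pi.single a 1 : Fin n → ℝ) + (0:ℝ) • (Pi.single a 1 : Fin n → ℝ))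
    rw [quad_pair] at this
    simpa using this
  have hdiag1 : ∀ a, M a a ≤ 1 := by
    intro a
    have : M a a ≤ M.trace := by
      exact Finset.single_le_sum (f := fun a => M a a) (fun b _ => hdiag b) (Finset.mem_univ a)
    simpa [ht] using this
  rcases eq_or_ne i j with rfl | hij
  · rw [abs_le]
    exact ⟨by linarith [hdiag i], hdiag1 i⟩
  · have hsum : M i i + M j j ≤ 1 := by
      have h1 : ∑ a ∈ ({i, j} : Finset (Fin n)), M a a ≤ M.trace := by
        refine Finset.sum_le_sum_of_subset_of_nonneg (Finset.subset_univ _) ?_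
        exact fun b _ _ => hdiag b
      rw [Finset.sum_pair hij, ht] at h1
      exact h1
    have hp := hq ((Pi.single i 1 : Fin n → ℝ) + (1:ℝ) • (Pi.single j 1 : Fin n → ℝ))
    have hm := hq ((Pi.single i 1 : Fin n → ℝ) + (-1:ℝ) • (Pi.single j 1 : Fin n → ℝ))
    rw [quad_pair] at hp hm
    have hsji := hsym j i
    rw [abs_le]
    constructor <;> nlinarith [hdiag i, hdiag j]

lemma KK_bounded : KK n ⊆ Metric.closedBall 0 n := by
  intro x hx
  obtain ⟨hs, hq, ht⟩ := hx
  rw [Metric.mem_closedBall, dist_zero_right, EuclideanSpace.norm_eq]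
  have hb : ∀ p : Fin n × Fin n, ‖x p‖ ≤ 1 := by
    intro p
    have : x p = (toEuc.symm x) p.1 p.2 := rfl
    rw [Real.norm_eq_abs, this]
    exact entry_bound hs hq ht p.1 p.2
  have hsum : ∑ p : Fin n × Fin n, ‖x p‖ ^ 2 ≤ (n : ℝ) * n := by
    calc ∑ p : Fin n × Fin n, ‖x p‖ ^ 2 ≤ ∑ _p : Fin n × Fin n, (1:ℝ) := by
          refine Finset.sum_le_sum fun p _ => ?_
          have := hb p
          nlinarith [norm_nonneg (x p)]
      _ = (n : ℝ) * n := by simp [Finset.card_univ]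
  calc Real.sqrt (∑ p : Fin n × Fin n, ‖x p‖ ^ 2) ≤ Real.sqrt ((n:ℝ) * n) :=
        Real.sqrt_le_sqrt hsum
    _ = n := Real.sqrt_mul_self (by positivity)

lemma KK_compact : IsCompact (KK n) :=
  (isCompact_closedBall (0 : EuclideanSpace ℝ (Fin n × Fin n)) n).of_isClosed_subset
    KK_closed KK_bounded

lemma exists_posdef_orth {k : ℕ} (A : Fin k → Matrix (Fin n) (Fin n) ℝ)
    (hA : ∀ i, (A i).IsSymm)
    (h : ∀ c : Fin k → ℝ, (∑ i, c i • A i).PosSemidef → (∑ i, c i • A i) = 0) :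
    ∃ X : Matrix (Fin n) (Fin n) ℝ, X.PosDef ∧ ∀ i, (A i * X).trace = 0 := by
  classical
  set V : Submodule ℝ (EuclideanSpace ℝ (Fin n × Fin n)) :=
    Submodule.span ℝ (Set.range fun i => toEuc (A i)) with hV
  have hVclosed : IsClosed (V : Set (EuclideanSpace ℝ (Fin n × Fin n))) := Submodule.closed_of_finiteDimensional V
  have hVconvex : Convex ℝ (V : Set (EuclideanSpace ℝ (Fin n × Fin n))) := V.convex
  have hdisj : Disjoint (V : Set (EuclideanSpace ℝ (Fin n × Fin n))) (KK n) := by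
    rw [Set.disjoint_left]
    rintro x hxV ⟨hs, hq, ht⟩
    obtain ⟨c, hc⟩ := (Submodule.mem_span_range_iff_exists_fun ℝ).mp hxV
    have hM : (toEuc.symm x : Matrix (Fin n) (Fin n) ℝ) = ∑ i, c i • A i := by
      rw [← hc]; simp [map_sum, _root_.map_smul]
    have hpsd : (toEuc.symm x : Matrix (Fin n) (Fin n) ℝ).PosSemidef := by
      refine PosSemidef.of_dotProduct_mulVec_nonneg ?_ (fun v => ?_)
      · ext i j
        rw [conjTranspose_apply, star_trivial]
        exact hs j i
      · simpa using hq v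
    rw [hM] at hpsd
    have h0 := h c hpsd
    rw [← hM] at h0
    rw [h0] at ht
    simp at ht
  obtain ⟨f, u, v, hfV, huv, hfK⟩ :=
    geometric_hahn_banach_closed_compact hVconvex hVclosed KK_convex KK_compact hdisj
  have hu0 : (0:ℝ) < u := by simpa using hfV 0 V.zero_mem
  have hfV0 : ∀ y ∈ V, f y = 0 := by
    intro y hy
    by_contra hne
    have ht := hfV (((|u| + 1) / f y) • y) (V.smul_mem _ hy)
    rw [_root_.map_smul, smul_eq_mul, div_mul_cancel₀ _ hne] at ht
    have : u ≤ |u| := le_abs_self u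
    linarith
  set g : Matrix (Fin n) (Fin n) ℝ →ₗ[ℝ] ℝ :=
    (f : EuclideanSpace ℝ (Fin n × Fin n) →L[ℝ] ℝ).toLinearMap.comp toEuc.toLinearMap with hg
  have hgA : ∀ i, g (A i) = 0 := fun i =>
    hfV0 _ (Submodule.subset_span ⟨i, rfl⟩)
  set C : Matrix (Fin n) (Fin n) ℝ := Matrix.of fun j i => g (single i j 1) with hC
  have hgtrace : ∀ M : Matrix (Fin n) (Fin n) ℝ, (M * C).trace = g M := by
    intro M
    have h1 : (M * C).trace = ∑ i, ∑ j, M i j * C j i := by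
      simp [Matrix.trace, Matrix.mul_apply, Matrix.diag]
    rw [h1]
    conv_rhs => rw [matrix_eq_sum_single M]
    rw [map_sum]
    refine Finset.sum_congr rfl fun i _ => ?_
    rw [map_sum]
    refine Finset.sum_congr rfl fun j _ => ?_
    have h2 : single i j (M i j) = (M i j) • single i j 1 := by
      rw [smul_single, smul_eq_mul, mul_one]
    rw [h2, _root_.map_smul, smul_eq_mul]
    rfl
  set X : Matrix (Fin n) (Fin n) ℝ := ((1:ℝ)/2) • (C + Cᵀ) with hX
  have hXsymm : Xᵀ = X := by
    rw [hX, transpose_smul, transpose_add, transpose_transpose, add_comm]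
  have htr : ∀ M : Matrix (Fin n) (Fin n) ℝ, Mᵀ = M → (M * X).trace = g M := by
    intro M hM
    have h2 : (M * Cᵀ).trace = (M * C).trace := by
      calc (M * Cᵀ).trace = ((M * Cᵀ)ᵀ).trace := (trace_transpose _).symm
        _ = (C * Mᵀ).trace := by rw [transpose_mul, transpose_transpose]
        _ = (C * M).trace := by rw [hM]
        _ = (M * C).trace := trace_mul_comm _ _
    rw [hX, Matrix.mul_smul, trace_smul, Matrix.mul_add, trace_add, h2, hgtrace, smul_eq_mul]
    ring
  have houter : ∀ w : Fin n → ℝ,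
      ((Matrix.of fun i j => w i * w j) * X).trace = w ⬝ᵥ X *ᵥ w := by
    intro w
    simp only [Matrix.trace, Matrix.diag, Matrix.mul_apply, Matrix.of_apply, dotProduct, mulVec,
      Finset.mul_sum]
    rw [Finset.sum_comm]
    exact Finset.sum_congr rfl fun a _ => Finset.sum_congr rfl fun b _ => by ring
  have hXpd : X.PosDef := by
    refine posDef_iff_dotProduct_mulVec.mpr ⟨?_, ?_⟩
    · ext i j
      rw [conjTranspose_apply, star_trivial]
      conv_rhs => rw [← hXsymm]
      rfl
    · intro w hw
      set s : ℝ := w ⬝ᵥ w with hs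
      have hs0 : 0 < s := by
        have h1 : 0 ≤ s := Finset.sum_nonneg fun a _ => mul_self_nonneg _
        rcases h1.lt_or_eq with h1 | h1
        · exact h1
        · exact absurd (dotProduct_self_eq_zero.mp h1.symm) hw
      set P : Matrix (Fin n) (Fin n) ℝ := s⁻¹ • Matrix.of (fun i j => w i * w j) with hP
      have hPsym : Pᵀ = P := by
        ext i j
        simp [hP, mul_comm]
      have hPmem : toEuc P ∈ KK n := by
        refine ⟨?_, ?_, ?_⟩
        · intro i j
          rw [LinearEquiv.symm_apply_apply]
          simp [hP, mul_comm]
        · intro v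
          rw [LinearEquiv.symm_apply_apply, hP, smul_mulVec, dotProduct_smul, smul_eq_mul]
          have hvq : v ⬝ᵥ (Matrix.of fun i j => w i * w j) *ᵥ v = (w ⬝ᵥ v) * (w ⬝ᵥ v) := by
            simp only [dotProduct, mulVec, Matrix.of_apply, Finset.mul_sum, Finset.sum_mul]
            refine Finset.sum_congr rfl fun a _ => Finset.sum_congr rfl fun b _ => by ring
          rw [hvq]
          exact mul_nonneg (inv_nonneg.mpr hs0.le) (mul_self_nonneg _)
        · rw [LinearEquiv.symm_apply_apply, hP, trace_smul, smul_eq_mul]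
          have h3 : (Matrix.of fun i j => w i * w j).trace = s := by
            simp [Matrix.trace, Matrix.diag, hs, dotProduct]
          rw [h3, inv_mul_cancel₀ hs0.ne']
      have hfP := hfK _ hPmem
      have hgP : 0 < g P := lt_trans (lt_trans hu0 huv) hfP
      have htrP : (P * X).trace = s⁻¹ * (w ⬝ᵥ X *ᵥ w) := by
        rw [hP, Matrix.smul_mul, trace_smul, houter, smul_eq_mul]
      rw [← htr P hPsym, htrP] at hgP
      have hq : 0 < w ⬝ᵥ X *ᵥ w := by
        by_contra hle
        push_neg at hle
        nlinarith [inv_pos.mpr hs0]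
      simpa using hq
  exact ⟨X, hXpd, fun i => by rw [htr (A i) (hA i), hgA i]⟩

lemma posdef_smul {X : Matrix (Fin n) (Fin n) ℝ} (hX : X.PosDef) {r : ℝ} (hr : 0 < r) :
    (r • X).PosDef := by
  refine posDef_iff_dotProduct_mulVec.mpr ⟨?_, fun x hx => ?_⟩
  · ext i j
    rw [conjTranspose_apply, star_trivial, Matrix.smul_apply, Matrix.smul_apply, smul_eq_mul,
      smul_eq_mul]
    have := congrFun (congrFun hX.1 i) j
    rw [conjTranspose_apply, star_trivial] at this
    rw [this]
  · rw [smul_mulVec, dotProduct_smul, smul_eq_mul]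
    exact mul_pos hr (hX.dotProduct_mulVec_pos hx)

end SDPAux

/-- A collection of symmetric matrices has a nonzero positive semidefinite
linear combination iff the intersection of the hyperplanes `A_i^⊥` in `𝒫(n)` is empty. -/
theorem semidefinite_combination_iff_empty_intersection
    (n k : ℕ) (hn : 1 ≤ n) (hk : 1 ≤ k)
    (A : Fin k → Matrix (Fin n) (Fin n) ℝ) (hA : ∀ i, (A i).IsSymm) :
    (∃ c : Fin k → ℝ, (∑ i, c i • A i) ≠ 0 ∧ (∑ i, c i • A i).PosSemidef) ↔
      ¬∃ X : Matrix (Fin n) (Fin n) ℝ,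
        X.PosDef ∧ X.det = 1 ∧ ∀ i, (A i * X).trace = 0 := by
  constructor
  · rintro ⟨c, hne, hpsd⟩ ⟨X, hXpd, hdet, htr⟩
    have htrB : ((∑ i, c i • A i) * X).trace = 0 := by
      rw [Finset.sum_mul]
      simp only [Matrix.smul_mul, trace_sum, trace_smul, htr, smul_zero,
        Finset.sum_const_zero]
    exact hne (SDPAux.psd_posdef_trace hpsd hXpd htrB)
  · intro hno
    by_contra hc
    have h' : ∀ c : Fin k → ℝ, (∑ i, c i • A i).PosSemidef → (∑ i, c i • A i) = 0 := by
      intro c hpsd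
      by_contra hne
      exact hc ⟨c, hne, hpsd⟩
    obtain ⟨X, hXpd, htr⟩ := SDPAux.exists_posdef_orth A hA h'
    apply hno
    have hd : 0 < X.det := hXpd.det_pos
    set r : ℝ := X.det ^ (-(1/n : ℝ)) with hr'
    have hr : 0 < r := Real.rpow_pos_of_pos hd _
    have hrn : r ^ (n : ℕ) = X.det⁻¹ := by
      rw [hr', ← Real.rpow_natCast (X.det ^ (-(1/n : ℝ))) n, ← Real.rpow_mul hd.le]
      have hne : (n : ℝ) ≠ 0 := by
        exact_mod_cast Nat.one_le_iff_ne_zero.mp hn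
      have : -(1/n : ℝ) * n = -1 := by field_simp
      rw [this, Real.rpow_neg_one]
    refine ⟨r • X, SDPAux.posdef_smul hXpd hr, ?_, fun i => ?_⟩
    · rw [Matrix.det_smul, Fintype.card_fin, hrn, inv_mul_cancel₀ hd.ne']
    · rw [Matrix.mul_smul, trace_smul, htr i, smul_zero]
end

section
/- Let A and B be real symmetric n×n matrices such that the matrix pencil (A,B) is regular, i.e. det(A − z·B) ≠ 0 for at least one z ∈ ℂ (viewing A and B as complex matrices). If the hyperplanes A^⊥ and B^⊥ are disjoint, i.e. there is no X ∈ 𝒫(n) with tr(A·X) = 0 and tr(B·X) = 0, then all generalized eigenvalues of the pencil (A,B) are real: every z ∈ ℂ with det(A − z·B) = 0 satisfies Im z = 0. -/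
open Matrix

open Complex

variable {n : ℕ}

lemma trace_mul_vecMulVec (A : Matrix (Fin n) (Fin n) ℝ) (x y : Fin n → ℝ) :
    (A * vecMulVec x y).trace = y ⬝ᵥ (A *ᵥ x) := by
  simp only [Matrix.trace, Matrix.diag, Matrix.mul_apply, vecMulVec_apply, dotProduct, mulVec,
    Finset.mul_sum]
  exact Finset.sum_congr rfl fun i _ => Finset.sum_congr rfl fun j _ => by ring

lemma quad_vecMulVec (u x : Fin n → ℝ) :
    x ⬝ᵥ ((vecMulVec u u) *ᵥ x) = (u ⬝ᵥ x) ^ 2 := by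
  simp only [dotProduct, mulVec, vecMulVec_apply, Finset.mul_sum, Finset.sum_mul, sq]
  exact Finset.sum_congr rfl fun i _ => Finset.sum_congr rfl fun j _ => by ring

lemma conj_quad (A : Matrix (Fin n) (Fin n) ℝ) (hA : A.IsSymm) (v : Fin n → ℂ) :
    star (star v ⬝ᵥ ((A.map Complex.ofReal) *ᵥ v)) = star v ⬝ᵥ ((A.map Complex.ofReal) *ᵥ v) := by
  simp only [dotProduct, mulVec, Matrix.map_apply, Pi.star_apply, Finset.mul_sum]
  rw [star_sum]
  simp only [star_sum, star_mul', star_star, Complex.star_def, Complex.conj_ofReal]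
  rw [Finset.sum_comm]
  exact Finset.sum_congr rfl fun i _ => Finset.sum_congr rfl fun j _ => by
    rw [hA.apply i j, Complex.conj_conj]; ring

lemma re_quad (A : Matrix (Fin n) (Fin n) ℝ) (v : Fin n → ℂ) :
    (star v ⬝ᵥ ((A.map Complex.ofReal) *ᵥ v)).re =
      (fun i => (v i).re) ⬝ᵥ (A *ᵥ fun i => (v i).re)
      + (fun i => (v i).im) ⬝ᵥ (A *ᵥ fun i => (v i).im) := by
  simp only [dotProduct, mulVec, Matrix.map_apply, Pi.star_apply, Finset.mul_sum,
    Complex.re_sum]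
  rw [← Finset.sum_add_distrib]
  refine Finset.sum_congr rfl fun i _ => ?_
  rw [← Finset.sum_add_distrib]
  refine Finset.sum_congr rfl fun j _ => ?_
  simp [Complex.mul_re, Complex.conj_re, Complex.conj_im, Complex.ofReal_re, Complex.ofReal_im]

attribute [local instance] Matrix.normedAddCommGroup Matrix.normedSpace

lemma quad_abs_bound (D : Matrix (Fin n) (Fin n) ℝ) (x : Fin n → ℝ) (hx : ‖x‖ = 1) :
    |x ⬝ᵥ D *ᵥ x| ≤ (n : ℝ)^2 * ‖D‖ := by
  have hxi : ∀ i, |x i| ≤ 1 := by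
    intro i
    simpa [hx, Real.norm_eq_abs] using norm_le_pi_norm x i
  have hterm : ∀ i j, |x i * (D i j * x j)| ≤ ‖D‖ := by
    intro i j
    rw [abs_mul, abs_mul]
    have hD : |D i j| ≤ ‖D‖ := by
      simpa [Real.norm_eq_abs] using D.norm_entry_le_entrywise_sup_norm (i := i) (j := j)
    have h0 : (0:ℝ) ≤ ‖D‖ := norm_nonneg _
    calc |x i| * (|D i j| * |x j|) ≤ 1 * (‖D‖ * 1) :=
          mul_le_mul (hxi i) (mul_le_mul hD (hxi j) (abs_nonneg _) h0)
            (by positivity) zero_le_one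
      _ = ‖D‖ := by ring
  calc |x ⬝ᵥ D *ᵥ x| ≤ ∑ i, ∑ j, |x i * (D i j * x j)| := by
        simp only [dotProduct, mulVec, Finset.mul_sum]
        exact (Finset.abs_sum_le_sum_abs _ _).trans
          (Finset.sum_le_sum fun i _ => Finset.abs_sum_le_sum_abs _ _)
    _ ≤ ∑ _i : Fin n, ∑ _j : Fin n, ‖D‖ := by
        exact Finset.sum_le_sum fun i _ => Finset.sum_le_sum fun j _ => hterm i j
    _ = (n : ℝ)^2 * ‖D‖ := by simp [Finset.sum_const, sq]; ring

lemma isOpen_quadPos :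
    IsOpen {M : Matrix (Fin n) (Fin n) ℝ | ∀ x : Fin n → ℝ, x ≠ 0 → 0 < x ⬝ᵥ M *ᵥ x} := by
  rcases Nat.eq_zero_or_pos n with hn | hn
  · subst hn
    convert isOpen_univ
    ext M
    simp only [Set.mem_setOf_eq, Set.mem_univ, iff_true]
    intro x hx
    exact absurd (funext fun i => i.elim0) hx
  · haveI : Nonempty (Fin n) := Fin.pos_iff_nonempty.mp hn
    refine Metric.isOpen_iff.mpr ?_
    intro M hM
    set S := Metric.sphere (0 : Fin n → ℝ) 1 with hS
    have hScomp : IsCompact S := isCompact_sphere _ _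
    have hSne : S.Nonempty := by
      refine ⟨fun _ => 1, ?_⟩
      simp [hS, pi_norm_const]
    have hcont : Continuous fun x : Fin n → ℝ => x ⬝ᵥ M *ᵥ x := by
      simp only [dotProduct, mulVec]
      exact continuous_finset_sum _ fun i _ =>
        (continuous_apply i).mul
          (continuous_finset_sum _ fun j _ => continuous_const.mul (continuous_apply j))
    obtain ⟨x₀, hx₀S, hmin⟩ := hScomp.exists_isMinOn hSne hcont.continuousOn
    have hx₀norm : ‖x₀‖ = 1 := by simpa [hS] using hx₀S
    have hx₀ : x₀ ≠ 0 := by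
      intro h; rw [h] at hx₀norm; simp at hx₀norm
    have hcpos : 0 < x₀ ⬝ᵥ M *ᵥ x₀ := hM x₀ hx₀
    set c := x₀ ⬝ᵥ M *ᵥ x₀ with hc
    refine ⟨c / ((n:ℝ)^2 + 1), by positivity, ?_⟩
    intro N hN
    rw [Metric.mem_ball, dist_eq_norm] at hN
    intro x hx
    have hxn : (0:ℝ) < ‖x‖ := norm_pos_iff.mpr hx
    set y := ‖x‖⁻¹ • x with hy
    have hyS : y ∈ S := by
      simp only [hS, Metric.mem_sphere, dist_zero_right]
      exact norm_smul_inv_norm hx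
    have hyM : c ≤ y ⬝ᵥ M *ᵥ y := hmin hyS
    have hynorm : ‖y‖ = 1 := by simpa [hS, Metric.mem_sphere, dist_zero_right] using hyS
    have hbound : |y ⬝ᵥ (N - M) *ᵥ y| ≤ (n:ℝ)^2 * ‖N - M‖ := quad_abs_bound _ _ hynorm
    have hsplit : y ⬝ᵥ N *ᵥ y = y ⬝ᵥ M *ᵥ y + y ⬝ᵥ (N - M) *ᵥ y := by
      rw [← dotProduct_add, ← Matrix.add_mulVec, add_sub_cancel]
    have hlt : (n:ℝ)^2 * ‖N - M‖ < c := by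
      have h1 : (n:ℝ)^2 * ‖N - M‖ ≤ ((n:ℝ)^2 + 1) * ‖N - M‖ := by
        nlinarith [norm_nonneg (N - M)]
      have h2 : ((n:ℝ)^2 + 1) * ‖N - M‖ < c := by
        have hpos : (0:ℝ) < (n:ℝ)^2 + 1 := by positivity
        calc ((n:ℝ)^2 + 1) * ‖N - M‖ < ((n:ℝ)^2 + 1) * (c / ((n:ℝ)^2 + 1)) := by
              exact mul_lt_mul_of_pos_left hN hpos
          _ = c := by field_simp
      linarith
    have hykey : 0 < y ⬝ᵥ N *ᵥ y := by
      have := abs_le.mp hbound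
      rw [hsplit]
      linarith [this.1]
    have hxy : x ⬝ᵥ N *ᵥ x = ‖x‖ * (‖x‖ * (y ⬝ᵥ N *ᵥ y)) := by
      rw [hy, smul_dotProduct, Matrix.mulVec_smul, dotProduct_smul]
      field_simp
      rw [smul_eq_mul, smul_eq_mul, one_div]
      have hinv := mul_inv_cancel₀ hxn.ne'
      linear_combination (-(x ⬝ᵥ N *ᵥ x) * (‖x‖ * ‖x‖⁻¹ + 1)) * hinv
    rw [hxy]
    positivity

lemma convex_quadPos :
    Convex ℝ {M : Matrix (Fin n) (Fin n) ℝ | ∀ x : Fin n → ℝ, x ≠ 0 → 0 < x ⬝ᵥ M *ᵥ x} := by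
  intro M hM N hN p q hp hq hpq
  intro x hx
  have h1 := hM x hx
  have h2 := hN x hx
  have expand : x ⬝ᵥ (p • M + q • N) *ᵥ x = p * (x ⬝ᵥ M *ᵥ x) + q * (x ⬝ᵥ N *ᵥ x) := by
    rw [Matrix.add_mulVec, dotProduct_add, Matrix.smul_mulVec, Matrix.smul_mulVec,
      dotProduct_smul, dotProduct_smul, smul_eq_mul, smul_eq_mul]
  rw [expand]
  rcases hp.lt_or_eq with hp' | hp'
  · nlinarith
  · rw [← hp'] at hpq ⊢
    simp at hpq ⊢
    nlinarith

lemma pos_of_eps {a b : ℝ} (h : ∀ ε : ℝ, 0 < ε → 0 < a + ε * b) : 0 ≤ a := by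
  by_contra hneg
  push_neg at hneg
  rcases le_or_gt b 0 with hb | hb
  · have := h 1 one_pos
    nlinarith
  · have hkey := h (-a / (2 * b)) (div_pos (by linarith) (by linarith))
    have : -a / (2 * b) * b = -a / 2 := by field_simp
    rw [this] at hkey
    linarith

lemma dotProduct_self_pos' {x : Fin n → ℝ} (hx : x ≠ 0) : 0 < x ⬝ᵥ x := by
  rcases (Finset.sum_nonneg fun i (_ : i ∈ Finset.univ) => mul_self_nonneg (x i)).eq_or_lt with h | h
  · exact absurd (dotProduct_self_eq_zero.mp h.symm) hx
  · exact h

/-- If the regular symmetric pencil `(A,B)` has disjoint hyperplanes `A^⊥`,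
`B^⊥` in `𝒫(n)`, then all generalized eigenvalues of the pencil are real. -/
theorem generalized_eigenvalues_real_of_disjoint_hyperplanes
    (n : ℕ) (A B : Matrix (Fin n) (Fin n) ℝ) (hA : A.IsSymm) (hB : B.IsSymm)
    (hreg : ∃ z : ℂ,
      ((A.map (Complex.ofReal)) - z • (B.map (Complex.ofReal))).det ≠ 0)
    (hdisj : ¬∃ X : Matrix (Fin n) (Fin n) ℝ,
      X.PosDef ∧ X.det = 1 ∧ (A * X).trace = 0 ∧ (B * X).trace = 0) :
    ∀ z : ℂ, ((A.map (Complex.ofReal)) - z • (B.map (Complex.ofReal))).det = 0 →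
      z.im = 0 := by
  classical
  intro z hz
  by_contra him
  rcases Nat.eq_zero_or_pos n with hn0 | hn0
  · subst hn0
    rw [Matrix.det_isEmpty] at hz
    exact one_ne_zero hz
  set A' := A.map (Complex.ofReal) with hA'
  set B' := B.map (Complex.ofReal) with hB'
  -- eigenvector for z
  obtain ⟨v, hv0, hv⟩ := (Matrix.exists_mulVec_eq_zero_iff).mpr hz
  have heig : A' *ᵥ v = z • (B' *ᵥ v) := by
    rw [Matrix.sub_mulVec, Matrix.smul_mulVec] at hv
    exact sub_eq_zero.mp hv
  set u : Fin n → ℝ := fun i => (v i).re with hu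
  set w : Fin n → ℝ := fun i => (v i).im with hw
  set a := star v ⬝ᵥ (A' *ᵥ v) with ha
  set b := star v ⬝ᵥ (B' *ᵥ v) with hb
  have hab : a = z * b := by rw [ha, heig, dotProduct_smul, smul_eq_mul]
  have hsa : star a = a := conj_quad A hA v
  have hsb : star b = b := conj_quad B hB v
  have hb0 : b = 0 := by
    have h1 : (z - starRingEnd ℂ z) * b = 0 := by
      have h2 : star a = starRingEnd ℂ z * b := by
        rw [hab, star_mul', hsb, Complex.star_def, mul_comm]
      have h3 : starRingEnd ℂ z * b = z * b := by rw [← h2, hsa, hab]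
      rw [sub_mul, h3, sub_self]
    have h2 : z - starRingEnd ℂ z ≠ 0 := by
      rw [sub_ne_zero]
      intro h
      exact him (Complex.conj_eq_iff_im.mp h.symm)
    exact (mul_eq_zero.mp h1).resolve_left h2
  have ha0 : a = 0 := by rw [hab, hb0, mul_zero]
  -- the PSD witness X₁
  set X₁ := vecMulVec u u + vecMulVec w w with hX₁
  have htrA₁ : (A * X₁).trace = 0 := by
    rw [hX₁, mul_add, trace_add, trace_mul_vecMulVec, trace_mul_vecMulVec]
    have h := re_quad A v
    rw [← hA', ← ha, ha0] at h
    rw [← hu, ← hw] at h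
    simpa using h.symm
  have htrB₁ : (B * X₁).trace = 0 := by
    rw [hX₁, mul_add, trace_add, trace_mul_vecMulVec, trace_mul_vecMulVec]
    have h := re_quad B v
    rw [← hB', ← hb, hb0] at h
    rw [← hu, ← hw] at h
    simpa using h.symm
  -- the two sets
  set U := {M : Matrix (Fin n) (Fin n) ℝ | ∀ x : Fin n → ℝ, x ≠ 0 → 0 < x ⬝ᵥ M *ᵥ x} with hUdef
  set Wt := {M : Matrix (Fin n) (Fin n) ℝ | (A * M).trace = 0 ∧ (B * M).trace = 0} with hWdef
  have hUW : Disjoint U Wt := by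
    rw [Set.disjoint_left]
    rintro M hMU ⟨hMA, hMB⟩
    apply hdisj
    set X₂ := (1/2 : ℝ) • (M + Mᵀ) with hX₂
    have hX₂quad : ∀ x : Fin n → ℝ, x ⬝ᵥ X₂ *ᵥ x = x ⬝ᵥ M *ᵥ x := by
      intro x
      have htr : x ⬝ᵥ Mᵀ *ᵥ x = x ⬝ᵥ M *ᵥ x := by
        rw [Matrix.mulVec_transpose, dotProduct_comm, ← Matrix.dotProduct_mulVec]
      rw [hX₂, Matrix.smul_mulVec, dotProduct_smul, Matrix.add_mulVec, dotProduct_add,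
        htr, smul_eq_mul]
      ring
    have hX₂herm : X₂.IsHermitian := by
      rw [Matrix.IsHermitian]
      ext i j
      simp only [Matrix.conjTranspose_apply, hX₂, Matrix.smul_apply, Matrix.add_apply,
        Matrix.transpose_apply, star_trivial, smul_eq_mul]
      ring
    have hX₂pd : X₂.PosDef := by
      refine Matrix.PosDef.of_dotProduct_mulVec_pos hX₂herm fun x hx => ?_
      rw [star_trivial, hX₂quad]
      exact hMU x hx
    have htrA₂ : (A * X₂).trace = 0 := by
      have htrT : (A * Mᵀ).trace = (A * M).trace := by
        simp only [Matrix.trace, Matrix.diag, Matrix.mul_apply, Matrix.transpose_apply]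
        rw [Finset.sum_comm]
        exact Finset.sum_congr rfl fun i _ => Finset.sum_congr rfl fun j _ => by
          rw [hA.apply i j]
      rw [hX₂, Matrix.mul_smul, trace_smul, mul_add, trace_add, htrT, hMA, smul_eq_mul]
      ring
    have htrB₂ : (B * X₂).trace = 0 := by
      have htrT : (B * Mᵀ).trace = (B * M).trace := by
        simp only [Matrix.trace, Matrix.diag, Matrix.mul_apply, Matrix.transpose_apply]
        rw [Finset.sum_comm]
        exact Finset.sum_congr rfl fun i _ => Finset.sum_congr rfl fun j _ => by
          rw [hB.apply i j]
      rw [hX₂, Matrix.mul_smul, trace_smul, mul_add, trace_add, htrT, hMB, smul_eq_mul]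
      ring
    have hdet : 0 < X₂.det := hX₂pd.det_pos
    set cc := X₂.det ^ (-(1:ℝ)/n) with hcc
    have hccpos : 0 < cc := Real.rpow_pos_of_pos hdet _
    refine ⟨cc • X₂, ?_, ?_, ?_, ?_⟩
    · refine Matrix.PosDef.of_dotProduct_mulVec_pos ?_ fun x hx => ?_
      · rw [Matrix.IsHermitian] at hX₂herm ⊢
        rw [Matrix.conjTranspose_smul, hX₂herm, star_trivial]
      · rw [star_trivial, Matrix.smul_mulVec, dotProduct_smul, smul_eq_mul]
        exact mul_pos hccpos (by rw [← star_trivial x] ; exact hX₂pd.dotProduct_mulVec_pos hx)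
    · rw [Matrix.det_smul]
      rw [hcc, Fintype.card_fin]
      rw [← Real.rpow_natCast (X₂.det ^ (-(1:ℝ)/n)) n, ← Real.rpow_mul hdet.le]
      have : -(1:ℝ)/n * n = -1 := by
        field_simp
      rw [this, Real.rpow_neg_one]
      exact inv_mul_cancel₀ hdet.ne'
    · rw [Matrix.mul_smul, trace_smul, htrA₂, smul_zero]
    · rw [Matrix.mul_smul, trace_smul, htrB₂, smul_zero]
  have hWconv : Convex ℝ Wt := by
    intro M hM N hN p q hp hq hpq
    constructor
    · rw [mul_add, trace_add, Matrix.mul_smul, Matrix.mul_smul, trace_smul, trace_smul,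
        hM.1, hN.1, smul_zero, smul_zero, add_zero]
    · rw [mul_add, trace_add, Matrix.mul_smul, Matrix.mul_smul, trace_smul, trace_smul,
        hM.2, hN.2, smul_zero, smul_zero, add_zero]
  obtain ⟨f, s₀, hfU, hfW⟩ :=
    geometric_hahn_banach_open (convex_quadPos) (isOpen_quadPos) hWconv hUW
  -- f vanishes on Wt and is negative on U
  have hfW0 : ∀ M ∈ Wt, f M = 0 := by
    intro M hM
    by_contra hfM
    have hmem : ∀ t : ℝ, t • M ∈ Wt := by
      intro t
      exact ⟨by rw [Matrix.mul_smul, trace_smul, hM.1, smul_zero],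
        by rw [Matrix.mul_smul, trace_smul, hM.2, smul_zero]⟩
    have h1 := hfW _ (hmem ((s₀ - 1) / f M))
    rw [_root_.map_smul, smul_eq_mul, div_mul_cancel₀ _ hfM] at h1
    linarith
  have hs₀ : s₀ ≤ 0 := by
    have h0 : (0 : Matrix (Fin n) (Fin n) ℝ) ∈ Wt := by
      constructor <;> simp
    have := hfW 0 h0
    simpa using this
  have hfUneg : ∀ M ∈ U, f M < 0 := fun M hM => lt_of_lt_of_le (hfU M hM) hs₀
  have hIU : (1 : Matrix (Fin n) (Fin n) ℝ) ∈ U := by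
    intro x hx
    rw [Matrix.one_mulVec]
    exact dotProduct_self_pos' hx
  -- linear functionals
  set g : Matrix (Fin n) (Fin n) ℝ →ₗ[ℝ] ℝ :=
    { toFun := fun M => (A * M).trace
      map_add' := fun M N => by
        show (A * (M + N)).trace = (A * M).trace + (A * N).trace
        rw [mul_add, trace_add]
      map_smul' := fun t M => by
        show (A * (t • M)).trace = t • (A * M).trace
        rw [Matrix.mul_smul, trace_smul] } with hg
  set h : Matrix (Fin n) (Fin n) ℝ →ₗ[ℝ] ℝ :=
    { toFun := fun M => (B * M).trace
      map_add' := fun M N => by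
        show (B * (M + N)).trace = (B * M).trace + (B * N).trace
        rw [mul_add, trace_add]
      map_smul' := fun t M => by
        show (B * (t • M)).trace = t • (B * M).trace
        rw [Matrix.mul_smul, trace_smul] } with hh
  have hker : ⨅ i : Fin 2, LinearMap.ker (![g, h] i) ≤ LinearMap.ker (f : _ →ₗ[ℝ] ℝ) := by
    intro M hM
    rw [Submodule.mem_iInf] at hM
    have h0 := hM 0
    have h1 := hM 1
    simp only [Matrix.cons_val_zero, Matrix.cons_val_one, Matrix.head_cons,
      LinearMap.mem_ker] at h0 h1
    rw [LinearMap.mem_ker]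
    exact hfW0 M ⟨h0, h1⟩
  have hspan := mem_span_of_iInf_ker_le_ker hker
  obtain ⟨cf, hcf⟩ := (Submodule.mem_span_range_iff_exists_fun ℝ).mp hspan
  set α := cf 0 with hα
  set β := cf 1 with hβ
  have hfval : ∀ M, f M = α * (A * M).trace + β * (B * M).trace := by
    intro M
    have h1 := LinearMap.congr_fun hcf M
    simp only [LinearMap.coe_sum, Finset.sum_apply, LinearMap.smul_apply, Fin.sum_univ_two,
      Matrix.cons_val_zero, Matrix.cons_val_one, Matrix.head_cons, smul_eq_mul,
      LinearMap.coe_mk, AddHom.coe_mk] at h1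
    exact h1.symm
  -- the PSD matrix C
  set C : Matrix (Fin n) (Fin n) ℝ := -(α • A + β • B) with hCdef
  have hCtr : ∀ M : Matrix (Fin n) (Fin n) ℝ,
      (C * M).trace = -(α * (A * M).trace + β * (B * M).trace) := by
    intro M
    rw [hCdef, Matrix.neg_mul, trace_neg, Matrix.add_mul, trace_add, Matrix.smul_mul,
      Matrix.smul_mul, trace_smul, trace_smul, smul_eq_mul, smul_eq_mul]
  have hCquad : ∀ x : Fin n → ℝ, 0 ≤ x ⬝ᵥ C *ᵥ x := by
    intro x
    apply pos_of_eps (b := C.trace)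
    intro ε hε
    have hmem : vecMulVec x x + ε • (1 : Matrix (Fin n) (Fin n) ℝ) ∈ U := by
      intro y hy
      rw [Matrix.add_mulVec, dotProduct_add, quad_vecMulVec, Matrix.smul_mulVec,
        Matrix.one_mulVec, dotProduct_smul, smul_eq_mul]
      exact add_pos_of_nonneg_of_pos (sq_nonneg _) (mul_pos hε (dotProduct_self_pos' hy))
    have h1 := hfUneg _ hmem
    rw [hfval] at h1
    have h4 : x ⬝ᵥ C *ᵥ x + ε * C.trace
        = (C * (vecMulVec x x + ε • (1 : Matrix (Fin n) (Fin n) ℝ))).trace := by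
      rw [mul_add, trace_add, trace_mul_vecMulVec, Matrix.mul_smul, Matrix.mul_one, trace_smul,
        smul_eq_mul]
    rw [h4, hCtr]
    linarith
  have hCherm : C.IsHermitian := by
    rw [Matrix.IsHermitian]
    ext i j
    simp only [Matrix.conjTranspose_apply, hCdef, Matrix.neg_apply, Matrix.add_apply,
      Matrix.smul_apply, star_trivial, smul_eq_mul]
    rw [hA.apply i j, hB.apply i j]
  have hCpsd : C.PosSemidef := Matrix.PosSemidef.of_dotProduct_mulVec_nonneg hCherm fun x => by rw [star_trivial]; exact hCquad x
  have hαβ : ¬(α = 0 ∧ β = 0) := by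
    rintro ⟨h1, h2⟩
    have h3 := hfUneg 1 hIU
    rw [hfval 1, h1, h2] at h3
    norm_num at h3
  have htrCX₁ : u ⬝ᵥ (C *ᵥ u) + w ⬝ᵥ (C *ᵥ w) = 0 := by
    have h1 := hCtr X₁
    rw [htrA₁, htrB₁, mul_zero, mul_zero, add_zero, neg_zero] at h1
    rw [hX₁, mul_add, trace_add, trace_mul_vecMulVec, trace_mul_vecMulVec] at h1
    exact h1
  have hCu : C *ᵥ u = 0 := by
    have h1 : u ⬝ᵥ (C *ᵥ u) = 0 := le_antisymm (by linarith [hCquad w]) (hCquad u)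
    exact (hCpsd.dotProduct_mulVec_zero_iff u).mp (by rw [star_trivial]; exact h1)
  have hCw : C *ᵥ w = 0 := by
    have h1 : w ⬝ᵥ (C *ᵥ w) = 0 := le_antisymm (by linarith [hCquad u]) (hCquad w)
    exact (hCpsd.dotProduct_mulVec_zero_iff w).mp (by rw [star_trivial]; exact h1)
  have hC'v : (C.map Complex.ofReal) *ᵥ v = 0 := by
    funext i
    have hsplit : ∀ j, ((C i j : ℂ)) * v j
        = ((C i j * u j : ℝ) : ℂ) + ((C i j * w j : ℝ) : ℂ) * Complex.I := by
      intro j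
      rw [← Complex.re_add_im (v j)]
      push_cast
      simp only [hu, hw]
      ring
    have hCu' : ∑ j, C i j * u j = 0 := by
      have := congrFun hCu i
      simpa [mulVec, dotProduct] using this
    have hCw' : ∑ j, C i j * w j = 0 := by
      have := congrFun hCw i
      simpa [mulVec, dotProduct] using this
    simp only [mulVec, dotProduct, Matrix.map_apply, Pi.zero_apply]
    rw [Finset.sum_congr rfl fun j _ => hsplit j, Finset.sum_add_distrib, ← Finset.sum_mul,
      ← Complex.ofReal_sum, ← Complex.ofReal_sum, hCu', hCw']
    simp
  have hC'eq : C.map Complex.ofReal = -((α : ℂ) • A' + (β : ℂ) • B') := by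
    ext i j
    simp only [Matrix.map_apply, hCdef, hA', hB', Matrix.neg_apply, Matrix.add_apply,
      Matrix.smul_apply, smul_eq_mul]
    push_cast
    ring
  have hvrel : (((α : ℂ) * z + (β : ℂ))) • (B' *ᵥ v) = 0 := by
    rw [hC'eq] at hC'v
    rw [Matrix.neg_mulVec, neg_eq_zero, Matrix.add_mulVec, Matrix.smul_mulVec,
      Matrix.smul_mulVec, heig, smul_smul] at hC'v
    rw [add_smul]
    exact hC'v
  rcases eq_or_ne ((α : ℂ) * z + (β : ℂ)) 0 with hzero | hnonzero
  · have him' : α * z.im = 0 := by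
      have h1 := congrArg Complex.im hzero
      simpa [Complex.add_im, Complex.mul_im] using h1
    have hα0 : α = 0 := by
      rcases mul_eq_zero.mp him' with h | h
      · exact h
      · exact absurd h him
    have hβ0 : β = 0 := by
      rw [hα0] at hzero
      simpa using hzero
    exact hαβ ⟨hα0, hβ0⟩
  · have hBv : B' *ᵥ v = 0 := (smul_eq_zero.mp hvrel).resolve_left hnonzero
    have hAv : A' *ᵥ v = 0 := by rw [heig, hBv, smul_zero]
    obtain ⟨z₀, hz₀⟩ := hreg
    apply hz₀
    exact (Matrix.exists_mulVec_eq_zero_iff).mp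
      ⟨v, hv0, by rw [Matrix.sub_mulVec, Matrix.smul_mulVec, hAv, hBv, smul_zero,
        sub_zero]⟩
end

section
/- Let d ≥ 1, let λ ∈ ℝ, and let J_{λ,d} be the d×d upper-triangular Jordan block with eigenvalue λ (entries λ on the diagonal, 1 on the superdiagonal, 0 elsewhere). Suppose A and B are real symmetric d×d matrices satisfying A = B·J_{λ,d}. Then, using 1-based indices: (1) A_{j,k} = A_{j',k'} whenever j + k = j' + k', and A_{j,k} = 0 whenever j + k ≤ d; and (2) the same two properties hold for the entries of B. -/
open Matrix

/-- If `A`, `B` are symmetric `d×d` matrices with `A = B * J` for a Jordan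
block `J = J_{λ,d}`, then the entries of `A` (and of `B`) are constant along
anti-diagonals and vanish on the anti-diagonals above the main anti-diagonal
(in 1-based indices: `A_{j,k} = A_{j',k'}` when `j+k = j'+k'`, and `A_{j,k} = 0` when
`j+k ≤ d`). -/
theorem jordan_pencil_antidiagonal_structure
    (d : ℕ) (hd : 1 ≤ d) (lam : ℝ)
    (J : Matrix (Fin d) (Fin d) ℝ)
    (hJ : ∀ i j : Fin d,
      J i j = if j = i then lam else if (j : ℕ) = (i : ℕ) + 1 then 1 else 0)
    (A B : Matrix (Fin d) (Fin d) ℝ) (hA : A.IsSymm) (hB : B.IsSymm)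
    (hAB : A = B * J) :
    ((∀ j k j' k' : Fin d, (j : ℕ) + (k : ℕ) = (j' : ℕ) + (k' : ℕ) → A j k = A j' k') ∧
      (∀ j k : Fin d, ((j : ℕ) + 1) + ((k : ℕ) + 1) ≤ d → A j k = 0)) ∧
    ((∀ j k j' k' : Fin d, (j : ℕ) + (k : ℕ) = (j' : ℕ) + (k' : ℕ) → B j k = B j' k') ∧
      (∀ j k : Fin d, ((j : ℕ) + 1) + ((k : ℕ) + 1) ≤ d → B j k = 0)) := by
  have hk1 : ∀ k : Fin d, (k : ℕ) - 1 < d :=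
    fun k => Nat.lt_of_le_of_lt (Nat.sub_le _ _) k.isLt
  have hAs : ∀ i j : Fin d, A i j = A j i := fun i j => hA.apply j i
  have hBs : ∀ i j : Fin d, B i j = B j i := fun i j => hB.apply j i
  -- entrywise formula for A
  have hent : ∀ j k : Fin d,
      A j k = lam * B j k + (if 0 < (k : ℕ) then B j ⟨(k : ℕ) - 1, hk1 k⟩ else 0) := by
    intro j k
    rw [hAB, mul_apply]
    have hterm : ∀ i : Fin d, B j i * J i k
        = (if i = k then lam * B j k else 0)
          + (if (k : ℕ) = (i : ℕ) + 1 then B j i else 0) := by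
      intro i
      rw [hJ]
      by_cases h1 : k = i
      · subst h1
        simp [mul_comm]
      · rw [if_neg h1, if_neg (show ¬ i = k from fun h => h1 h.symm), zero_add]
        by_cases h2 : (k : ℕ) = (i : ℕ) + 1
        · rw [if_pos h2, if_pos h2, mul_one]
        · rw [if_neg h2, if_neg h2, mul_zero]
    rw [Finset.sum_congr rfl (fun i _ => hterm i), Finset.sum_add_distrib]
    congr 1
    · rw [Finset.sum_ite_eq' Finset.univ k (fun _ => lam * B j k), if_pos (Finset.mem_univ k)]
    · by_cases hk : 0 < (k : ℕ)
      · have hcond : ∀ i : Fin d,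
            ((k : ℕ) = (i : ℕ) + 1) = (i = ⟨(k : ℕ) - 1, hk1 k⟩) := by
          intro i
          rw [eq_iff_iff, Fin.ext_iff]
          simp only [Fin.val_mk]
          omega
        simp only [hcond]
        rw [Finset.sum_ite_eq' Finset.univ _ (fun i => B j i),
          if_pos (Finset.mem_univ _), if_pos hk]
      · rw [if_neg hk]
        apply Finset.sum_eq_zero
        intro i _
        rw [if_neg (by omega)]
  -- key symmetry relation between the correction terms
  have hkey : ∀ j k : Fin d,
      (if 0 < (k : ℕ) then B j ⟨(k : ℕ) - 1, hk1 k⟩ else 0)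
        = (if 0 < (j : ℕ) then B k ⟨(j : ℕ) - 1, hk1 j⟩ else 0) := by
    intro j k
    have h1 := hent j k
    have h2 := hent k j
    have h3 := hAs j k
    have h4 := hBs j k
    rw [h1, h2, h4] at h3
    linarith
  -- first row of B vanishes before the last entry
  have hzero0 : ∀ m : Fin d, (m : ℕ) + 1 < d → B ⟨0, hd⟩ m = 0 := by
    intro m hm
    have h := hkey ⟨0, hd⟩ ⟨(m : ℕ) + 1, hm⟩
    rw [if_pos (by simp), if_neg (by simp)] at h
    have : (⟨(⟨(m : ℕ) + 1, hm⟩ : Fin d).val - 1, hk1 _⟩ : Fin d) = m := by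
      apply Fin.ext; simp
    rwa [this] at h
  -- shifting along an anti-diagonal
  have hstep : ∀ j k : Fin d, (hj : (j : ℕ) + 1 < d) → 0 < (k : ℕ) →
      B j k = B ⟨(j : ℕ) + 1, hj⟩ ⟨(k : ℕ) - 1, hk1 k⟩ := by
    intro j k hj hk
    have h := hkey (⟨(j : ℕ) + 1, hj⟩ : Fin d) k
    rw [if_pos hk, if_pos (by simp)] at h
    have hjj : (⟨(⟨(j : ℕ) + 1, hj⟩ : Fin d).val - 1, hk1 _⟩ : Fin d) = j := by
      apply Fin.ext; simp
    rw [hjj] at h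
    rw [h]
    exact hBs j k
  -- constancy along anti-diagonals, by induction on the row shift
  have hconstn : ∀ n : ℕ, ∀ j k j' k' : Fin d, (j' : ℕ) = (j : ℕ) + n →
      (j : ℕ) + (k : ℕ) = (j' : ℕ) + (k' : ℕ) → B j k = B j' k' := by
    intro n
    induction n with
    | zero =>
      intro j k j' k' h1 h2
      have hj : j' = j := Fin.ext (by omega)
      have hk : k' = k := Fin.ext (by omega)
      rw [hj, hk]
    | succ n ih =>
      intro j k j' k' h1 h2
      have hjd : (j : ℕ) + 1 < d := by have := j'.isLt; omega
      have hkpos : 0 < (k : ℕ) := by omega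
      rw [hstep j k hjd hkpos]
      exact ih ⟨(j : ℕ) + 1, hjd⟩ ⟨(k : ℕ) - 1, hk1 k⟩ j' k'
        (by simp only [Fin.val_mk]; omega) (by simp only [Fin.val_mk]; omega)
  have hBconst : ∀ j k j' k' : Fin d,
      (j : ℕ) + (k : ℕ) = (j' : ℕ) + (k' : ℕ) → B j k = B j' k' := by
    intro j k j' k' hsum
    rcases le_total (j : ℕ) (j' : ℕ) with h | h
    · exact hconstn ((j' : ℕ) - (j : ℕ)) j k j' k' (by omega) hsum
    · exact (hconstn ((j : ℕ) - (j' : ℕ)) j' k' j k (by omega) hsum.symm).symm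
  have hBzero : ∀ j k : Fin d, ((j : ℕ) + 1) + ((k : ℕ) + 1) ≤ d → B j k = 0 := by
    intro j k h
    have hjk : (j : ℕ) + (k : ℕ) < d := by omega
    have h0 : B j k = B ⟨0, hd⟩ ⟨(j : ℕ) + (k : ℕ), hjk⟩ :=
      hBconst j k _ _ (by simp only [Fin.val_mk]; omega)
    rw [h0]
    exact hzero0 _ (by simp only [Fin.val_mk]; omega)
  -- A inherits both properties
  have hAconst : ∀ j k j' k' : Fin d,
      (j : ℕ) + (k : ℕ) = (j' : ℕ) + (k' : ℕ) → A j k = A j' k' := by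
    intro j k j' k' hsum
    rw [hent j k, hent j' k', hBconst j k j' k' hsum]
    congr 1
    by_cases hk : 0 < (k : ℕ) <;> by_cases hk' : 0 < (k' : ℕ)
    · rw [if_pos hk, if_pos hk']
      exact hBconst _ _ _ _ (by simp only [Fin.val_mk]; omega)
    · rw [if_pos hk, if_neg hk']
      exact hBzero _ _ (by simp only [Fin.val_mk]; have := j'.isLt; omega)
    · rw [if_neg hk, if_pos hk']
      exact (hBzero _ _ (by simp only [Fin.val_mk]; have := j.isLt; omega)).symm
    · rw [if_neg hk, if_neg hk']
  have hAzero : ∀ j k : Fin d, ((j : ℕ) + 1) + ((k : ℕ) + 1) ≤ d → A j k = 0 := by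
    intro j k h
    rw [hent j k, hBzero j k h]
    by_cases hk : 0 < (k : ℕ)
    · rw [if_pos hk, hBzero _ _ (by simp only [Fin.val_mk]; omega)]
      ring
    · rw [if_neg hk]; ring
  exact ⟨⟨hAconst, hAzero⟩, ⟨hBconst, hBzero⟩⟩
end

section
/- Fix an integer r ≥ 1. For 1 ≤ l ≤ r let K_l be the r×r real matrix whose (s,t) entry (1-based indices) is 1 if s + t = r + l and 0 otherwise. Let x_1, …, x_r be real numbers with x_1 ≠ 0, and set X = Σ_{l=1}^r x_l·K_l and X̃ = Σ_{l=1}^{r−1} x_l·K_{l+1}. Then for every real s > 0 and every real t there exists g ∈ GL(r,ℝ) with det(g) > 0 such that gᵀ·X̃·g = X̃ and gᵀ·X·g = s·X + t·X̃. -/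
open Matrix

open PowerSeries Matrix

noncomputable section
namespace AntiBandAux

lemma coeff_mul_congr {N : ℕ} {A B : PowerSeries ℝ} (w : PowerSeries ℝ)
    (h : ∀ n ≤ N, coeff n A = coeff n B) :
    coeff N (A * w) = coeff N (B * w) := by
  rw [coeff_mul, coeff_mul]
  refine Finset.sum_congr rfl fun p hp => ?_
  rw [Finset.HasAntidiagonal.mem_antidiagonal] at hp
  rw [h p.1 (by omega)]

lemma coeff_X_pow_mul' (N n : ℕ) (u : PowerSeries ℝ) :
    coeff N (X ^ n * u) = if n ≤ N then coeff (N - n) u else 0 := by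
  split_ifs with h
  · obtain ⟨d, rfl⟩ : ∃ d, N = d + n := ⟨N - n, by omega⟩
    rw [show d + n - n = d from by omega, coeff_X_pow_mul]
  · rw [coeff_mul]
    refine Finset.sum_eq_zero fun p hp => ?_
    rw [Finset.HasAntidiagonal.mem_antidiagonal] at hp
    rw [coeff_X_pow, if_neg (by omega), zero_mul]

lemma L1 (r : ℕ) (hr : 1 ≤ r) (P Q h : PowerSeries ℝ) :
    ∑ i : Fin r, ∑ j : Fin r,
      coeff i P * coeff j Q * coeff (r-1) (X ^ ((i:ℕ)+(j:ℕ)) * h)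
      = coeff (r-1) (P * Q * h) := by
  set A : PowerSeries ℝ := ∑ i : Fin r, C (coeff i P) * X ^ (i:ℕ) with hA
  set B : PowerSeries ℝ := ∑ j : Fin r, C (coeff j Q) * X ^ (j:ℕ) with hB
  have hAc : ∀ n ≤ r - 1, coeff n A = coeff n P := by
    intro n hn
    rw [hA, _root_.map_sum]
    rw [Finset.sum_eq_single (⟨n, by omega⟩ : Fin r)]
    · simp [coeff_C_mul, coeff_X_pow]
    · intro i _ hi
      rw [coeff_C_mul, coeff_X_pow, if_neg, mul_zero]
      intro hni
      exact hi (by exact Fin.ext (by simpa using hni.symm))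
    · simp
  have hBc : ∀ n ≤ r - 1, coeff n B = coeff n Q := by
    intro n hn
    rw [hB, _root_.map_sum]
    rw [Finset.sum_eq_single (⟨n, by omega⟩ : Fin r)]
    · simp [coeff_C_mul, coeff_X_pow]
    · intro i _ hi
      rw [coeff_C_mul, coeff_X_pow, if_neg, mul_zero]
      intro hni
      exact hi (by exact Fin.ext (by simpa using hni.symm))
    · simp
  have step1 : coeff (r-1) (P * Q * h) = coeff (r-1) (A * B * h) := by
    have e1 : P * Q * h = P * (Q * h) := by ring
    have e2 : A * (Q * h) = Q * (A * h) := by ring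
    have e3 : B * (A * h) = A * B * h := by ring
    rw [e1, ← coeff_mul_congr (Q * h) hAc, e2, ← coeff_mul_congr (A * h) hBc, e3]
  rw [step1, hA, hB, Finset.sum_mul, Finset.sum_mul, _root_.map_sum]
  refine Finset.sum_congr rfl fun i _ => ?_
  rw [Finset.mul_sum, Finset.sum_mul, _root_.map_sum]
  refine Finset.sum_congr rfl fun j _ => ?_
  have : C ((coeff ↑i) P) * X ^ (i:ℕ) * (C ((coeff ↑j) Q) * X ^ (j:ℕ)) * h
      = C ((coeff ↑i) P) * (C ((coeff ↑j) Q) * (X ^ ((i:ℕ)+(j:ℕ)) * h)) := by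
    rw [pow_add]; ring
  rw [this, coeff_C_mul, coeff_C_mul]
  ring


def wps (t : ℝ) : PowerSeries ℝ := 1 - C t * X

def phi (s t : ℝ) : PowerSeries ℝ := C s * X * (wps t)⁻¹

lemma constantCoeff_wps (t : ℝ) : constantCoeff (wps t) ≠ 0 := by
  simp [wps]

lemma phi_mul_wps (s t : ℝ) : phi s t * wps t = C s * X := by
  rw [phi, mul_assoc, PowerSeries.inv_mul_cancel _ (constantCoeff_wps t), mul_one]

lemma phi_pow_mul_eq (s t : ℝ) (k : ℕ) (u : PowerSeries ℝ) :
    phi s t ^ k * u = X ^ k * ((C s * (wps t)⁻¹) ^ k * u) := by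
  rw [phi, mul_pow, mul_pow]
  ring

/-- valuation bound -/
lemma coeff_phi_pow_mul (r : ℕ) (s t : ℝ) (m k : ℕ) (u : PowerSeries ℝ)
    (h : r - 1 < m + k) :
    coeff (r-1) (X ^ m * (phi s t ^ k * u)) = 0 := by
  rw [phi_pow_mul_eq, show (X:PowerSeries ℝ) ^ m * (X ^ k * ((C s * (wps t)⁻¹) ^ k * u))
      = X ^ (m+k) * ((C s * (wps t)⁻¹) ^ k * u) from by rw [pow_add]; ring,
    coeff_X_pow_mul', if_neg (by omega)]

/-- diagonal coefficient -/
lemma coeff_phi_pow_diag (r : ℕ) (s t : ℝ) (m k : ℕ) (u : PowerSeries ℝ)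
    (h : m + k = r - 1) :
    coeff (r-1) (X ^ m * (phi s t ^ k * u)) = s ^ k * constantCoeff u := by
  rw [phi_pow_mul_eq, show (X:PowerSeries ℝ) ^ m * (X ^ k * ((C s * (wps t)⁻¹) ^ k * u))
      = X ^ (m+k) * ((C s * (wps t)⁻¹) ^ k * u) from by rw [pow_add]; ring,
    coeff_X_pow_mul', if_pos (by omega), show r - 1 - (m+k) = 0 from by omega,
    coeff_zero_eq_constantCoeff, _root_.map_mul, _root_.map_pow, _root_.map_mul]
  simp [PowerSeries.constantCoeff_inv, wps]

lemma exists_c (r : ℕ) (hr : 1 ≤ r) (s t : ℝ) (hs : 0 < s)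
    (f : PowerSeries ℝ) (hf0 : 0 ≠ constantCoeff f) :
    ∃ c : PowerSeries ℝ, 0 < constantCoeff c ∧
      ∀ k : ℕ, coeff (r-1) (c * phi s t ^ k * f)
        = coeff (r-1) (X ^ k * ((C s + C t * X) * f)) := by
  have hf0' : constantCoeff f ≠ 0 := hf0.symm
  suffices H : ∀ m, m ≤ r → ∃ c : PowerSeries ℝ,
      (1 ≤ m → 0 < constantCoeff c) ∧
      ∀ k : ℕ, r - m ≤ k → coeff (r-1) (c * phi s t ^ k * f)
        = coeff (r-1) (X ^ k * ((C s + C t * X) * f)) by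
    obtain ⟨c, h1, h2⟩ := H r le_rfl
    exact ⟨c, h1 hr, fun k => h2 k (by omega)⟩
  intro m
  induction m with
  | zero =>
    intro _
    refine ⟨0, by omega, fun k hk => ?_⟩
    rw [zero_mul, zero_mul, _root_.map_zero, coeff_X_pow_mul', if_neg (by omega)]
  | succ m ih =>
    intro hm1
    obtain ⟨c, hc0, hcA⟩ := ih (by omega)
    set j := r - 1 - m with hj
    have hmj : m + j = r - 1 := by omega
    have hDne : s ^ j * constantCoeff f ≠ 0 :=
      mul_ne_zero (pow_ne_zero _ hs.ne') hf0'
    set RHSj := coeff (r-1) (X ^ j * ((C s + C t * X) * f)) with hRHSj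
    set d := (RHSj - coeff (r-1) (c * phi s t ^ j * f)) / (s ^ j * constantCoeff f)
      with hd
    refine ⟨c + C d * X ^ m, ?_, ?_⟩
    · -- positivity
      intro _
      by_cases hm : m = 0
      · subst hm
        have hj' : j = r - 1 := by omega
        have hcc : coeff (r-1) (c * phi s t ^ j * f)
            = constantCoeff c * (s ^ j * constantCoeff f) := by
          have e : c * phi s t ^ j * f = X ^ 0 * (phi s t ^ j * (c * f)) := by ring
          rw [e, coeff_phi_pow_diag r s t 0 j (c * f) (by omega), _root_.map_mul]
          ring
        have hRv : RHSj = s * constantCoeff f := by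
          rw [hRHSj, hj', coeff_X_pow_mul', if_pos (le_refl _),
            show r - 1 - (r-1) = 0 from by omega, coeff_zero_eq_constantCoeff,
            _root_.map_mul, _root_.map_add, _root_.map_mul]
          simp
        have hcv : constantCoeff (c + C d * X ^ 0) = constantCoeff c + d := by
          simp
        rw [hcv, hd, hcc, hRv]
        have key : constantCoeff c +
            (s * constantCoeff f - constantCoeff c * (s ^ j * constantCoeff f)) /
              (s ^ j * constantCoeff f)
            = (s / s ^ j) * (constantCoeff f / constantCoeff f) := by
          field_simp
          ring
        rw [key, div_self hf0', mul_one]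
        exact div_pos hs (pow_pos hs _)
      · have : constantCoeff (C d * X ^ m) = 0 := by
          rw [_root_.map_mul, _root_.map_pow, constantCoeff_X, zero_pow hm, mul_zero]
        rw [_root_.map_add, this, add_zero]
        exact hc0 (by omega)
    · -- conditions
      intro k hk
      have expand : coeff (r-1) ((c + C d * X ^ m) * phi s t ^ k * f)
          = coeff (r-1) (c * phi s t ^ k * f)
            + d * coeff (r-1) (X ^ m * (phi s t ^ k * f)) := by
        have e : (c + C d * X ^ m) * phi s t ^ k * f
            = c * phi s t ^ k * f + C d * (X ^ m * (phi s t ^ k * f)) := by ring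
        rw [e, _root_.map_add, coeff_C_mul]
      rcases eq_or_lt_of_le (show j ≤ k from by omega) with hkj | hkj
      · -- k = j
        subst hkj
        rw [expand, coeff_phi_pow_diag r s t m j f hmj, hd]
        rw [div_mul_cancel₀ _ hDne, hRHSj]
        ring
      · -- k > j
        rw [expand, coeff_phi_pow_mul r s t m k f (by omega), mul_zero, add_zero]
        exact hcA k (by omega)

lemma exists_b (r : ℕ) (c : PowerSeries ℝ) (hc0 : 0 < constantCoeff c) :
    ∃ b : PowerSeries ℝ, 0 < constantCoeff b ∧
      ∀ n < r, coeff n (b * b) = coeff n c := by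
  have hsq : 0 < Real.sqrt (constantCoeff c) := Real.sqrt_pos.2 hc0
  suffices H : ∀ m, ∃ b : PowerSeries ℝ,
      constantCoeff b = Real.sqrt (constantCoeff c) ∧
      ∀ n < m, coeff n (b * b) = coeff n c by
    obtain ⟨b, hb0, hbn⟩ := H r
    exact ⟨b, hb0 ▸ hsq, hbn⟩
  intro m
  induction m with
  | zero => exact ⟨C (Real.sqrt (constantCoeff c)), by simp, by omega⟩
  | succ m ih =>
    obtain ⟨b, hb0, hbn⟩ := ih
    have hzero : coeff 0 (b * b) = coeff 0 c := by
      rw [coeff_zero_eq_constantCoeff, _root_.map_mul, hb0, Real.mul_self_sqrt hc0.le]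
    by_cases hm : m = 0
    · subst hm
      refine ⟨b, hb0, fun n hn => ?_⟩
      interval_cases n
      exact hzero
    · set d := (coeff m c - coeff m (b * b)) / (2 * Real.sqrt (constantCoeff c))
        with hd
      refine ⟨b + C d * X ^ m, ?_, ?_⟩
      · rw [_root_.map_add, _root_.map_mul, _root_.map_pow, constantCoeff_X, zero_pow hm, mul_zero, add_zero,
          hb0]
      · intro n hn
        have e : (b + C d * X ^ m) * (b + C d * X ^ m)
            = b * b + C d * (X ^ m * b) + C d * (X ^ m * b)
              + C d * (C d * X ^ (m + m)) := by
          rw [pow_add]; ring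
        rw [e, _root_.map_add, _root_.map_add, _root_.map_add, coeff_C_mul, coeff_C_mul, coeff_C_mul,
          coeff_X_pow_mul', coeff_X_pow]
        rcases lt_or_eq_of_le (show n ≤ m from by omega) with hnm | hnm
        · rw [if_neg (by omega), if_neg (by omega)]
          simp [hbn n hnm]
        · subst hnm
          rw [if_pos le_rfl, if_neg (by omega), show n - n = 0 from by omega,
            coeff_zero_eq_constantCoeff, hb0]
          have h2 : coeff n (b*b) + d * Real.sqrt (constantCoeff c)
              + d * Real.sqrt (constantCoeff c) + d * (d * 0) = coeff n (b*b)
              + d * (2 * Real.sqrt (constantCoeff c)) := by ring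
          rw [h2, hd, div_mul_cancel₀ _ (mul_pos two_pos hsq).ne']
          ring


lemma exists_b_claims (r : ℕ) (hr : 1 ≤ r) (s t : ℝ) (hs : 0 < s)
    (f : PowerSeries ℝ) (hf0 : 0 ≠ constantCoeff f) :
    ∃ b : PowerSeries ℝ, 0 < constantCoeff b ∧
      (∀ k : ℕ, coeff (r-1) ((b*b) * (phi s t ^ k * f))
        = s * coeff (r-1) (X ^ k * f) + t * coeff (r-1) (X ^ k * (X * f))) ∧
      (∀ k : ℕ, coeff (r-1) ((b*b) * (phi s t ^ k * (X * f)))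
        = coeff (r-1) (X ^ k * (X * f))) := by
  obtain ⟨c, hc0, hcA⟩ := exists_c r hr s t hs f hf0
  obtain ⟨b, hb0, hbn⟩ := exists_b r c hc0
  have htrans : ∀ u : PowerSeries ℝ,
      coeff (r-1) (b * b * u) = coeff (r-1) (c * u) :=
    fun u => coeff_mul_congr u (fun n hn => hbn n (by omega))
  have hA : ∀ k : ℕ, coeff (r-1) ((b*b) * (phi s t ^ k * f))
      = s * coeff (r-1) (X ^ k * f) + t * coeff (r-1) (X ^ k * (X * f)) := by
    intro k
    rw [htrans, show c * (phi s t ^ k * f) = c * phi s t ^ k * f from by ring, hcA k,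
      show (X:PowerSeries ℝ) ^ k * ((C s + C t * X) * f)
        = C s * (X ^ k * f) + C t * (X ^ k * (X * f)) from by ring,
      _root_.map_add, coeff_C_mul, coeff_C_mul]
  have hsx : (C s) * X = phi s t - C t * (X * phi s t) := by
    rw [← phi_mul_wps s t, wps]; ring
  have hB : ∀ dd k : ℕ, r - 1 ≤ k + dd →
      coeff (r-1) ((b*b) * (phi s t ^ k * (X * f)))
        = coeff (r-1) (X ^ k * (X * f)) := by
    intro dd
    induction dd with
    | zero =>
      intro k hk
      rw [show (b*b) * (phi s t ^ k * (X * f)) = X ^ 1 * (phi s t ^ k * (b * b * f))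
          from by ring,
        coeff_phi_pow_mul r s t 1 k _ (by omega),
        show (X:PowerSeries ℝ) ^ k * (X * f) = X ^ (k+1) * f from by rw [pow_succ]; ring,
        coeff_X_pow_mul', if_neg (by omega)]
    | succ dd ih =>
      intro k hk
      have hB1 := ih (k+1) (by omega)
      have hA1 := hA (k+1)
      have e1 : C s * ((b*b) * (phi s t ^ k * (X * f)))
          = (b*b) * (phi s t ^ (k+1) * f)
            - C t * ((b*b) * (phi s t ^ (k+1) * (X * f))) := by
        calc C s * ((b*b) * (phi s t ^ k * (X * f)))
            = (b*b) * (phi s t ^ k * ((C s * X) * f)) := by ring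
          _ = (b*b) * (phi s t ^ k * ((phi s t - C t * (X * phi s t)) * f)) := by
              rw [hsx]
          _ = (b*b) * (phi s t ^ (k+1) * f)
              - C t * ((b*b) * (phi s t ^ (k+1) * (X * f))) := by
              rw [pow_succ]; ring
      have left : s * coeff (r-1) ((b*b) * (phi s t ^ k * (X * f)))
          = s * coeff (r-1) (X ^ k * (X * f)) := by
        rw [← coeff_C_mul, e1, _root_.map_sub, coeff_C_mul, hA1, hB1,
          show (X:PowerSeries ℝ) ^ k * (X * f) = X ^ (k+1) * f from by rw [pow_succ]; ring]
        ring
      exact mul_left_cancel₀ hs.ne' left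
  exact ⟨b, hb0, hA, fun k => hB (r-1) k (by omega)⟩


lemma coeff_b_phi_lt (s t : ℝ) (b : PowerSeries ℝ) (n u : ℕ) (h : n < u) :
    coeff n (b * phi s t ^ u) = 0 := by
  rw [mul_comm, phi_pow_mul_eq, coeff_X_pow_mul', if_neg (by omega)]

lemma coeff_b_phi_diag (s t : ℝ) (b : PowerSeries ℝ) (u : ℕ) :
    coeff u (b * phi s t ^ u) = s ^ u * constantCoeff b := by
  rw [mul_comm, phi_pow_mul_eq, coeff_X_pow_mul', if_pos le_rfl, Nat.sub_self,
    coeff_zero_eq_constantCoeff, _root_.map_mul, _root_.map_pow, _root_.map_mul]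
  simp [PowerSeries.constantCoeff_inv, wps]

lemma master (r : ℕ) (hr : 1 ≤ r) (s t : ℝ) (b h : PowerSeries ℝ) (u v : Fin r) :
    ((Matrix.of fun i w : Fin r => coeff (i:ℕ) (b * phi s t ^ (w:ℕ)))ᵀ *
      (Matrix.of fun i j : Fin r => coeff (r-1) (X ^ ((i:ℕ)+(j:ℕ)) * h)) *
      (Matrix.of fun i w : Fin r => coeff (i:ℕ) (b * phi s t ^ (w:ℕ))) : Matrix (Fin r) (Fin r) ℝ) u v
    = coeff (r-1) ((b*b) * (phi s t ^ ((u:ℕ)+(v:ℕ)) * h)) := by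
  rw [show (b*b) * (phi s t ^ ((u:ℕ)+(v:ℕ)) * h)
      = (b * phi s t ^ (u:ℕ)) * (b * phi s t ^ (v:ℕ)) * h from by rw [pow_add]; ring,
    ← L1 r hr]
  simp only [Matrix.mul_apply, Matrix.transpose_apply, Matrix.of_apply, Finset.sum_mul]
  rw [Finset.sum_comm]
  exact Finset.sum_congr rfl fun i _ => Finset.sum_congr rfl fun j _ => by ring

end AntiBandAux


/-- For the anti-diagonal band matrices `K_l` and
`X = ∑_{l=1}^r x_l K_l`, `X̃ = ∑_{l=1}^{r-1} x_l K_{l+1}` (with `x_1 ≠ 0`), for every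
`s > 0` and `t ∈ ℝ` there is `g ∈ GL⁺(r,ℝ)` with `gᵀ X̃ g = X̃` and
`gᵀ X g = s·X + t·X̃`. (Indices are written 0-based: the 1-based condition
`s + t = r + l` becomes `s + t + 1 = r + l` for `s,t,l : Fin r`.) -/
theorem antidiagonal_band_congruence
    (r : ℕ) (hr : 1 ≤ r) (x : Fin r → ℝ) (hx : x ⟨0, hr⟩ ≠ 0)
    (K : Fin r → Matrix (Fin r) (Fin r) ℝ)
    (hK : ∀ l u v : Fin r,
      K l u v = if (u : ℕ) + (v : ℕ) + 1 = r + (l : ℕ) then 1 else 0)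
    (X Xt : Matrix (Fin r) (Fin r) ℝ)
    (hX : X = ∑ l, x l • K l)
    (hXt : ∀ u v : Fin r,
      Xt u v = ∑ l : Fin r, x l * (if (u : ℕ) + (v : ℕ) = r + (l : ℕ) then 1 else 0)) :
    ∀ s : ℝ, 0 < s → ∀ t : ℝ,
      ∃ g : Matrix (Fin r) (Fin r) ℝ, 0 < g.det ∧
        gᵀ * Xt * g = Xt ∧ gᵀ * X * g = s • X + t • Xt := by
  intro s hs t
  classical
  set f : PowerSeries ℝ := PowerSeries.mk (fun k => if hk : k < r then x ⟨k, hk⟩ else 0)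
    with hf
  have hfc : PowerSeries.constantCoeff f = x ⟨0, hr⟩ := by
    rw [hf, ← PowerSeries.coeff_zero_eq_constantCoeff, PowerSeries.coeff_mk,
      dif_pos (show 0 < r from hr)]
  have hf0 : (0:ℝ) ≠ PowerSeries.constantCoeff f := by rw [hfc]; exact (Ne.symm hx)
  obtain ⟨b, hb0, hA, hB⟩ := AntiBandAux.exists_b_claims r hr s t hs f hf0
  set G : Matrix (Fin r) (Fin r) ℝ :=
    Matrix.of fun i w : Fin r => PowerSeries.coeff (i:ℕ) (b * AntiBandAux.phi s t ^ (w:ℕ))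
    with hG
  set Hf : Matrix (Fin r) (Fin r) ℝ :=
    Matrix.of fun i j : Fin r =>
      PowerSeries.coeff (r-1) (PowerSeries.X ^ ((i:ℕ)+(j:ℕ)) * f) with hHf
  set Hxf : Matrix (Fin r) (Fin r) ℝ :=
    Matrix.of fun i j : Fin r =>
      PowerSeries.coeff (r-1) (PowerSeries.X ^ ((i:ℕ)+(j:ℕ)) * (PowerSeries.X * f))
    with hHxf
  have cond2 : Gᵀ * Hxf * G = Hxf := by
    ext u v
    rw [hG, hHxf, AntiBandAux.master r hr s t b (PowerSeries.X * f) u v,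
      hB ((u:ℕ)+(v:ℕ)), Matrix.of_apply]
  have cond1 : Gᵀ * Hf * G = s • Hf + t • Hxf := by
    ext u v
    rw [hG, hHf, AntiBandAux.master r hr s t b f u v, hA ((u:ℕ)+(v:ℕ))]
    rw [hHxf]
    simp [Matrix.add_apply, Matrix.smul_apply, Matrix.of_apply]
  -- determinant of G
  have htri : (Gᵀ).BlockTriangular id := by
    intro i j hij
    rw [hG]
    exact AntiBandAux.coeff_b_phi_lt s t b j i hij
  have hdetG : 0 < G.det := by
    rw [← Matrix.det_transpose G, Matrix.det_of_upperTriangular htri]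
    refine Finset.prod_pos fun i _ => ?_
    rw [Matrix.transpose_apply, hG, Matrix.of_apply, AntiBandAux.coeff_b_phi_diag]
    exact mul_pos (pow_pos hs _) hb0
  -- the reversal permutation
  set e : Equiv.Perm (Fin r) := Fin.revPerm with he
  have hval : ∀ u : Fin r, ((e u : Fin r) : ℕ) = r - ((u:ℕ) + 1) := by
    intro u
    rw [he]
    simp [Fin.revPerm_apply, Fin.rev]
  have hXmat : X = Hf.submatrix e e := by
    ext u v
    have hu := u.isLt
    have hv := v.isLt
    rw [Matrix.submatrix_apply, hHf, Matrix.of_apply, hval u, hval v,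
      AntiBandAux.coeff_X_pow_mul', hX]
    simp only [Matrix.sum_apply, Matrix.smul_apply, hK, smul_eq_mul]
    by_cases hcase : r ≤ (u:ℕ) + (v:ℕ) + 1
    · rw [if_pos (by omega),
        show r - 1 - (r - ((u:ℕ) + 1) + (r - ((v:ℕ) + 1))) = (u:ℕ) + (v:ℕ) + 1 - r
          from by omega,
        hf, PowerSeries.coeff_mk, dif_pos (show (u:ℕ) + (v:ℕ) + 1 - r < r from by omega)]
      rw [Finset.sum_eq_single (⟨(u:ℕ) + (v:ℕ) + 1 - r, by omega⟩ : Fin r)]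
      · rw [if_pos (by simp; omega), mul_one]
      · intro l _ hl
        rw [if_neg, mul_zero]
        intro hcon
        refine hl (Fin.ext ?_)
        simp
        omega
      · intro hmem
        exact absurd (Finset.mem_univ _) hmem
    · rw [if_neg (by omega)]
      exact Finset.sum_eq_zero fun l _ => by rw [if_neg (by omega), mul_zero]
  have hXtmat : Xt = Hxf.submatrix e e := by
    ext u v
    have hu := u.isLt
    have hv := v.isLt
    rw [Matrix.submatrix_apply, hHxf, Matrix.of_apply, hval u, hval v,
      show PowerSeries.X ^ (r - ((u:ℕ) + 1) + (r - ((v:ℕ) + 1))) * (PowerSeries.X * f)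
        = PowerSeries.X ^ (r - ((u:ℕ) + 1) + (r - ((v:ℕ) + 1)) + 1) * f
          from by rw [pow_succ]; ring,
      AntiBandAux.coeff_X_pow_mul', hXt]
    by_cases hcase : r ≤ (u:ℕ) + (v:ℕ)
    · rw [if_pos (by omega),
        show r - 1 - (r - ((u:ℕ) + 1) + (r - ((v:ℕ) + 1)) + 1) = (u:ℕ) + (v:ℕ) - r
          from by omega,
        hf, PowerSeries.coeff_mk, dif_pos (show (u:ℕ) + (v:ℕ) - r < r from by omega)]
      rw [Finset.sum_eq_single (⟨(u:ℕ) + (v:ℕ) - r, by omega⟩ : Fin r)]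
      · rw [if_pos (by simp; omega), mul_one]
      · intro l _ hl
        rw [if_neg, mul_zero]
        intro hcon
        refine hl (Fin.ext ?_)
        simp
        omega
      · intro hmem
        exact absurd (Finset.mem_univ _) hmem
    · rw [if_neg (by omega)]
      exact Finset.sum_eq_zero fun l _ => by rw [if_neg (by omega), mul_zero]
  refine ⟨G.submatrix e e, ?_, ?_, ?_⟩
  · rw [Matrix.det_submatrix_equiv_self]
    exact hdetG
  · rw [hXtmat, Matrix.transpose_submatrix, Matrix.submatrix_mul_equiv,
      Matrix.submatrix_mul_equiv, cond2]
  · rw [hXmat, hXtmat, Matrix.transpose_submatrix, Matrix.submatrix_mul_equiv,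
      Matrix.submatrix_mul_equiv, cond1]
    ext u v
    simp [Matrix.submatrix_apply, Matrix.add_apply, Matrix.smul_apply]
end
end

section
/- Let A and B be real symmetric n×n matrices with B invertible, and let λ ≠ λ' be real numbers such that every complex root of the polynomial det(A − z·B) equals λ or λ' (i.e. λ and λ' are the only generalized eigenvalues of the pencil (A,B)). Set C = A − λ·B and C' = A − λ'·B. Then for all real s > 0 and s' > 0 there exists g ∈ GL(n,ℝ) with det(g) > 0 such that gᵀ·C·g = s·C and gᵀ·C'·g = s'·C'. -/
open Matrix Polynomial NormedSpace

section Aux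

variable {n : ℕ}

private abbrev V (n : ℕ) := Matrix (Fin n) (Fin n) ℝ


theorem exp_congr_aux {n : ℕ} (C X : Matrix (Fin n) (Fin n) ℝ) (μ : ℝ)
    (h : Xᵀ * C + C * X = μ • C) :
    (exp X)ᵀ * C * exp X = Real.exp μ • C := by
  letI : SeminormedRing (Matrix (Fin n) (Fin n) ℝ) := Matrix.linftyOpSemiNormedRing
  letI : NormedRing (Matrix (Fin n) (Fin n) ℝ) := Matrix.linftyOpNormedRing
  letI : NormedAlgebra ℝ (Matrix (Fin n) (Fin n) ℝ) := Matrix.linftyOpNormedAlgebra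
  have hsm : C * (μ • (1 : Matrix (Fin n) (Fin n) ℝ)) = μ • C := by
    rw [mul_smul_comm, mul_one]
  have key : Xᵀ * C = C * (μ • (1 : Matrix (Fin n) (Fin n) ℝ) - X) := by
    rw [mul_sub, hsm, ← h]; abel
  have hpow : ∀ k : ℕ, (Xᵀ)^k * C = C * (μ • (1 : Matrix (Fin n) (Fin n) ℝ) - X)^k := by
    intro k
    induction k with
    | zero => simp
    | succ k ih =>
      rw [pow_succ, pow_succ, mul_assoc, key, ← mul_assoc, ih, mul_assoc]
  have hexp : exp (Xᵀ) * C = C * exp (μ • (1 : Matrix (Fin n) (Fin n) ℝ) - X) := by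
    simp only [exp_eq_tsum ℝ]
    erw [← (expSeries_summable' (𝕂 := ℝ) (Xᵀ)).tsum_mul_right C]
    erw [← (expSeries_summable' (𝕂 := ℝ) (μ • (1 : Matrix (Fin n) (Fin n) ℝ) - X)).tsum_mul_left C]
    congr 1
    ext k
    rw [smul_mul_assoc, hpow, mul_smul_comm]
  have hsplit : exp (μ • (1 : Matrix (Fin n) (Fin n) ℝ) - X) * exp X
      = exp (μ • (1 : Matrix (Fin n) (Fin n) ℝ)) := by
    rw [← Matrix.exp_add_of_commute]
    · congr 1; abel
    · exact ((Commute.one_left X).smul_left μ).sub_left (Commute.refl X)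
  have hone : exp (μ • (1 : Matrix (Fin n) (Fin n) ℝ)) = Real.exp μ • 1 := by
    have : μ • (1 : Matrix (Fin n) (Fin n) ℝ) = algebraMap ℝ _ μ := by
      simp [Algebra.algebraMap_eq_smul_one]
    erw [this, ← algebraMap_exp_comm, ← Real.exp_eq_exp_ℝ, Algebra.algebraMap_eq_smul_one]
  calc (exp X)ᵀ * C * exp X = exp (Xᵀ) * C * exp X := by rw [Matrix.exp_transpose]
  _ = C * (exp (μ • (1 : Matrix (Fin n) (Fin n) ℝ) - X) * exp X) := by
      rw [hexp, mul_assoc]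
  _ = Real.exp μ • C := by rw [hsplit, hone, mul_smul_comm, mul_one]


theorem det_exp_pos {n : ℕ} (X : Matrix (Fin n) (Fin n) ℝ) : 0 < (exp X).det := by
  have h2 : exp X = exp ((1/2 : ℝ) • X) * exp ((1/2 : ℝ) • X) := by
    rw [← Matrix.exp_add_of_commute _ _ (Commute.refl _)]
    congr 1
    rw [← add_smul]; norm_num
  have hu : IsUnit (exp ((1/2:ℝ) • X)).det :=
    (Matrix.isUnit_iff_isUnit_det _).mp (Matrix.isUnit_exp _)
  rw [h2, det_mul]
  exact mul_self_pos.mpr hu.ne_zero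


theorem nilpotent_aux {n : ℕ} (A B : Matrix (Fin n) (Fin n) ℝ)
    (hBinv : IsUnit B.det) (lam lam' : ℝ) (hne : lam ≠ lam')
    (heig : ∀ z : ℂ,
      ((A.map (Complex.ofReal)) - z • (B.map (Complex.ofReal))).det = 0 →
        z = (lam : ℂ) ∨ z = (lam' : ℂ)) :
    ((B⁻¹*A - lam•1) * (B⁻¹*A - lam'•1))^n = 0 := by
  set M : Matrix (Fin n) (Fin n) ℝ := B⁻¹ * A with hM
  set f : ℝ →+* ℂ := Complex.ofRealHom
  have heig' : ∀ z : ℂ, ((A.map ⇑f) - z • (B.map ⇑f)).det = 0 →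
      z = (lam : ℂ) ∨ z = (lam' : ℂ) := heig
  set Mc : Matrix (Fin n) (Fin n) ℂ := M.map f with hMc
  have hroot : ∀ r : ℂ, (Mc.charpoly).IsRoot r → r = (lam:ℂ) ∨ r = (lam':ℂ) := by
    intro r hr
    apply heig'
    have hcm : (charmatrix Mc).map (evalRingHom r) = r • 1 - Mc := by
      ext i j
      by_cases h : i = j
      · subst h; simp [charmatrix_apply_eq]
      · simp [charmatrix_apply_ne _ _ _ h, Matrix.one_apply_ne h]
    have hev : eval r Mc.charpoly = ((charmatrix Mc).map (evalRingHom r)).det := by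
      rw [Matrix.charpoly, ← Polynomial.coe_evalRingHom, RingHom.map_det,
        RingHom.mapMatrix_apply]
    have hdet0 : (Mc - r • 1).det = 0 := by
      have h1 : (r • 1 - Mc).det = 0 := by rw [← hcm, ← hev]; exact hr
      rw [← neg_sub (r • (1 : Matrix (Fin n) (Fin n) ℂ)) Mc, Matrix.det_neg, h1, mul_zero]
    have hBA : (B.map f) * Mc = A.map f := by
      rw [← Matrix.map_mul, hM, ← Matrix.mul_assoc, Matrix.mul_nonsing_inv B hBinv,
        Matrix.one_mul]
    have hfac : A.map ⇑f - r • B.map ⇑f = (B.map ⇑f) * (Mc - r • 1) := by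
      rw [Matrix.mul_sub, hBA, Matrix.mul_smul, Matrix.mul_one]
    rw [hfac, Matrix.det_mul, hdet0, mul_zero]
  have hmonic : Mc.charpoly.Monic := Matrix.charpoly_monic Mc
  have hsplits : Splits Mc.charpoly := IsAlgClosed.splits _
  have hprod : Mc.charpoly = (Mc.charpoly.roots.map fun a => X - C a).prod :=
    hsplits.eq_prod_roots_of_monic hmonic
  have hcard : Multiset.card Mc.charpoly.roots = n := by
    rw [splits_iff_card_roots.mp hsplits, Matrix.charpoly_natDegree_eq_dim, Fintype.card_fin]
  have hlamne : (lam : ℂ) ≠ (lam' : ℂ) := by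
    exact_mod_cast fun h => hne (by exact_mod_cast h)
  set R := Mc.charpoly.roots with hR
  have hmem : ∀ r ∈ R, r = (lam:ℂ) ∨ r = (lam':ℂ) := fun r hrR =>
    hroot r (isRoot_of_mem_roots hrR)
  have hRsplit : R = Multiset.replicate (R.count (lam:ℂ)) (lam:ℂ)
      + Multiset.replicate (R.count (lam':ℂ)) (lam':ℂ) := by
    ext x
    rw [Multiset.count_add, Multiset.count_replicate, Multiset.count_replicate]
    by_cases h1 : x = (lam:ℂ)
    · subst h1; simp [hlamne, Ne.symm hlamne]
    · by_cases h2 : x = (lam':ℂ)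
      · subst h2; simp [hlamne, Ne.symm hlamne, h1, Ne.symm h1]
      · have h0 : Multiset.count x R = 0 := Multiset.count_eq_zero.mpr fun hx => by
          rcases hmem x hx with h | h
          exacts [h1 h, h2 h]
        simp [h0, h1, h2, Ne.symm h1, Ne.symm h2]
  have ha : R.count (lam:ℂ) ≤ n := hcard ▸ Multiset.count_le_card _ _
  have hb : R.count (lam':ℂ) ≤ n := hcard ▸ Multiset.count_le_card _ _
  have hdvd_c : Mc.charpoly ∣ ((X - C (lam:ℂ)) * (X - C (lam':ℂ)))^n := by
    rw [hprod, hRsplit, Multiset.map_add, Multiset.prod_add,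
      Multiset.map_replicate, Multiset.prod_replicate,
      Multiset.map_replicate, Multiset.prod_replicate, mul_pow]
    exact mul_dvd_mul (pow_dvd_pow _ ha) (pow_dvd_pow _ hb)
  have hdvd : M.charpoly ∣ ((X - C lam) * (X - C lam'))^n := by
    rw [← Polynomial.map_dvd_map (f : ℝ →+* ℂ) Complex.ofReal_injective
      (Matrix.charpoly_monic M)]
    have hq : (((X - C lam) * (X - C lam'))^n).map (f : ℝ →+* ℂ)
        = ((X - C (lam:ℂ)) * (X - C (lam':ℂ)))^n := by
      simp only [Polynomial.map_pow, Polynomial.map_mul, Polynomial.map_sub, Polynomial.map_X, Polynomial.map_C]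
      rfl
    rw [hq, ← Matrix.charpoly_map M (f : ℝ →+* ℂ)]
    exact hdvd_c
  obtain ⟨t, ht⟩ := hdvd
  have hch := Matrix.aeval_self_charpoly M
  have : aeval M (((X - C lam) * (X - C lam'))^n) = 0 := by
    rw [ht, _root_.map_mul, hch, zero_mul]
  calc ((M - lam•1) * (M - lam'•1))^n
      = aeval M (((X - C lam) * (X - C lam'))^n) := by
        simp [map_pow, _root_.map_mul, map_sub, aeval_X, aeval_C,
          Algebra.algebraMap_eq_smul_one]
  _ = 0 := this


theorem tr_pair (Z W : V n) : trace (Zᵀ * W) = ∑ i, ∑ j, Z i j * W i j := by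
  simp only [Matrix.trace, Matrix.diag, Matrix.mul_apply, Matrix.transpose_apply]
  exact Finset.sum_comm

theorem tr_zero_of_forall (W : V n) (h : ∀ X : V n, trace (Xᵀ * W) = 0) : W = 0 := by
  ext i j
  have := h (Matrix.single i j 1)
  rw [tr_pair] at this
  simp only [Matrix.single, Matrix.of_apply, ite_mul, one_mul, zero_mul] at this
  rw [Finset.sum_eq_single i, Finset.sum_eq_single j] at this
  · simpa using this
  · intro b _ hb; simp [Ne.symm hb]
  · intro hj; exact absurd (Finset.mem_univ j) hj
  · intro b _ hb
    apply Finset.sum_eq_zero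
    intro k _
    simp [Ne.symm hb]
  · intro hi; exact absurd (Finset.mem_univ i) hi

theorem dual_rep (ψ : Module.Dual ℝ (V n)) : ∃ Y : V n, ∀ Z, ψ Z = trace (Zᵀ * Y) := by
  refine ⟨Matrix.of (fun i j => ψ (Matrix.single i j 1)), fun Z => ?_⟩
  rw [tr_pair]
  conv_lhs => rw [matrix_eq_sum_single Z]
  rw [map_sum]
  refine Finset.sum_congr rfl fun i _ => ?_
  rw [map_sum]
  refine Finset.sum_congr rfl fun j _ => ?_
  have h1 : Matrix.single i j (Z i j) = Z i j • Matrix.single i j 1 := by simp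
  rw [h1, _root_.map_smul]
  simp [smul_eq_mul]

theorem solvable_aux (B N N' : V n) (hBinv : IsUnit B.det)
    (hCs : (B * N)ᵀ = B * N) (hC's : (B * N')ᵀ = B * N')
    (c : ℝ) (hc : c ≠ 0) (hN' : N' = N - c • 1)
    (hP : IsNilpotent (N * N')) (μ μ' : ℝ) :
    ∃ X : V n, Xᵀ * (B * N) + (B * N) * X = μ • (B * N) ∧
      Xᵀ * (B * N') + (B * N') * X = μ' • (B * N') := by
  set C := B * N with hC
  set C' := B * N' with hC'
  set T : V n →ₗ[ℝ] V n × V n :=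
    { toFun := fun X => (Xᵀ * C + C * X, Xᵀ * C' + C' * X)
      map_add' := fun X Z => by
        rw [Prod.mk_add_mk, Prod.mk.injEq]
        constructor
        · rw [transpose_add, add_mul, mul_add]; abel
        · rw [transpose_add, add_mul, mul_add]; abel
      map_smul' := fun r X => by
        rw [RingHom.id_apply, Prod.smul_mk, Prod.mk.injEq]
        constructor
        · rw [transpose_smul, smul_mul_assoc, mul_smul_comm, smul_add]
        · rw [transpose_smul, smul_mul_assoc, mul_smul_comm, smul_add] } with hT
  suffices hmem : (μ • C, μ' • C') ∈ LinearMap.range T by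
    obtain ⟨X, hX⟩ := hmem
    exact ⟨X, congrArg Prod.fst hX, congrArg Prod.snd hX⟩
  by_contra hmem
  obtain ⟨φ, hφt, hφbot⟩ := Submodule.exists_dual_map_eq_bot_of_notMem hmem inferInstance
  have hφT : ∀ X : V n, φ (T X) = 0 := by
    intro X
    have h3 : φ (T X) ∈ (LinearMap.range T).map φ :=
      Submodule.mem_map_of_mem (LinearMap.mem_range_self T X)
    rw [hφbot] at h3; simpa using h3
  obtain ⟨Y, hY⟩ := dual_rep (φ.comp (LinearMap.inl ℝ (V n) (V n)))
  obtain ⟨Y', hY'⟩ := dual_rep (φ.comp (LinearMap.inr ℝ (V n) (V n)))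
  have hφ : ∀ Z Z' : V n, φ (Z, Z') = trace (Zᵀ * Y) + trace (Z'ᵀ * Y') := by
    intro Z Z'
    have h4 : (Z, Z') = (LinearMap.inl ℝ (V n) (V n)) Z + (LinearMap.inr ℝ (V n) (V n)) Z' := by
      simp
    rw [h4, map_add, ← hY, ← hY']; rfl
  -- helper: transform the trace of the congruence expression
  have key1 : ∀ (D W X : V n), Dᵀ = D →
      trace ((Xᵀ * D + D * X)ᵀ * W) = trace (Xᵀ * (D * (W + Wᵀ))) := by
    intro D W X hD
    have e1 : (Xᵀ * D + D * X)ᵀ = D * X + Xᵀ * D := by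
      rw [transpose_add, transpose_mul, transpose_mul, transpose_transpose, hD]
    have e2 : trace ((D * X) * W) = trace (Xᵀ * (D * Wᵀ)) := by
      rw [← trace_transpose ((D * X) * W), transpose_mul, transpose_mul, hD,
        trace_mul_comm, mul_assoc]
    have e3 : trace ((Xᵀ * D) * W) = trace (Xᵀ * (D * W)) := by rw [mul_assoc]
    rw [e1, add_mul, trace_add, e2, e3, mul_add, mul_add, trace_add]
    abel
  set S := Y + Yᵀ with hSdef
  set S' := Y' + Y'ᵀ with hS'def
  have hrel : C * S + C' * S' = 0 := by
    apply tr_zero_of_forall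
    intro X
    have h0 := hφT X
    have hTX : T X = (Xᵀ * C + C * X, Xᵀ * C' + C' * X) := rfl
    rw [hTX, hφ, key1 C Y X hCs, key1 C' Y' X hC's] at h0
    rw [mul_add, trace_add, ← h0, ← trace_add, ← mul_add]
  have hS : Sᵀ = S := by rw [hSdef, transpose_add, transpose_transpose, add_comm]
  have hS' : S'ᵀ = S' := by rw [hS'def, transpose_add, transpose_transpose, add_comm]
  have hBi : B⁻¹ * B = 1 := Matrix.nonsing_inv_mul B hBinv
  have hNS : N * S + N' * S' = 0 := by
    have h5 := congrArg (fun Z => B⁻¹ * Z) hrel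
    simpa [hC, hC', mul_add, ← mul_assoc, hBi] using h5
  set Yh := S * B with hYhdef
  set Yh' := S' * B with hYh'def
  set W := Yh + Yh' with hWdef
  have hi : N * Yh + N' * Yh' = 0 := by
    have h6 := congrArg (fun Z => Z * B) hNS
    simpa [add_mul, mul_assoc] using h6
  have hii : Yh * N + Yh' * N' = 0 := by
    have h7 := congrArg (fun Z => Zᵀ) hrel
    simp only [transpose_add, transpose_mul, hS, hS', hCs, hC's, transpose_zero] at h7
    rw [hC, hC', ← mul_assoc, ← mul_assoc] at h7
    exact h7
  have hWN : W * N = N * W := by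
    have h1 : Yh * N + Yh' * N = c • Yh' := by
      have : Yh * N + (Yh' * N - c • Yh') = 0 := by
        simpa [hN', mul_sub, mul_smul_comm, mul_one] using hii
      have h := congrArg (fun Z => Z + c • Yh') this
      simpa [add_assoc] using h
    have h2 : N * Yh + N * Yh' = c • Yh' := by
      have : N * Yh + (N * Yh' - c • Yh') = 0 := by
        simpa [hN', sub_mul, smul_mul_assoc, one_mul] using hi
      have h := congrArg (fun Z => Z + c • Yh') this
      simpa [add_assoc] using h
    rw [hWdef, add_mul, mul_add, h1, h2]
  have hWN' : W * N' = N' * W := by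
    rw [hN', mul_sub, sub_mul, hWN, mul_smul_comm, smul_mul_assoc, mul_one, one_mul]
  have hYh : c • Yh = c • W - W * N := by
    have hWY : W - Yh = Yh' := by rw [hWdef]; abel
    have h8 : Yh * N + (W - Yh) * (N - c • 1) = 0 := by rw [hWY, ← hN']; exact hii
    have h9 : Yh * N + (W * N - c • W - Yh * N + c • Yh) = 0 := by
      have : (W - Yh) * (N - c • 1)
          = W * N - c • W - Yh * N + c • Yh := by
        rw [sub_mul, mul_sub, mul_sub, mul_smul_comm, mul_smul_comm, mul_one, mul_one]
        abel
      rw [← this]; exact h8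
    have h10 : W * N - c • W + c • Yh = 0 := by
      rw [← h9]; abel
    calc c • Yh = (W * N - c • W + c • Yh) + (c • W - W * N) := by abel
    _ = 0 + (c • W - W * N) := by rw [h10]
    _ = c • W - W * N := by rw [zero_add]
  have hcm1 : Commute W N := hWN
  have hcm2 : Commute W N' := hWN'
  have hPW : IsNilpotent (W * (N * N')) := by
    obtain ⟨k, hk⟩ := hP
    exact ⟨k, by rw [(hcm1.mul_right hcm2).mul_pow, hk, mul_zero]⟩
  have htr0 : trace (W * (N * N')) = 0 :=
    (Matrix.isNilpotent_trace_of_isNilpotent hPW).eq_zero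
  have hNN'comm : N' * N = N * N' := by
    rw [hN', sub_mul, mul_sub, smul_mul_assoc, mul_smul_comm, one_mul, mul_one]
  have htrNN' : trace (W * (N' * N)) = 0 := by rw [hNN'comm]; exact htr0
  have htrNYh : trace (N * Yh) = 0 := by
    have hkey : c • (N * Yh) = -(W * (N * N')) := by
      have e2 : N * (W * N) = W * (N * N) := by rw [← mul_assoc, ← hWN, mul_assoc]
      have e3 : W * (N * N') = W * (N * N) - c • (W * N) := by
        rw [hN', mul_sub, mul_smul_comm, mul_one, mul_sub, mul_smul_comm]
      calc c • (N * Yh) = N * (c • Yh) := (mul_smul_comm c N Yh).symm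
      _ = N * (c • W) - N * (W * N) := by rw [hYh, mul_sub]
      _ = c • (N * W) - W * (N * N) := by rw [mul_smul_comm, e2]
      _ = c • (W * N) - W * (N * N) := by rw [hWN]
      _ = -(W * (N * N')) := by rw [e3]; abel
    have h1 : c * trace (N * Yh) = 0 := by
      rw [← smul_eq_mul, ← trace_smul, hkey, trace_neg, htr0, neg_zero]
    exact (mul_eq_zero.mp h1).resolve_left hc
  have htrN'Yh' : trace (N' * Yh') = 0 := by
    have hYh'W : Yh' = W - Yh := by rw [hWdef]; abel
    have hkey : c • (N' * Yh) = c • (N' * W) - W * (N' * N) := by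
      calc c • (N' * Yh) = N' * (c • Yh) := (mul_smul_comm _ _ _).symm
      _ = N' * (c • W) - N' * (W * N) := by rw [hYh, mul_sub]
      _ = c • (N' * W) - W * (N' * N) := by
          rw [mul_smul_comm, ← mul_assoc, ← hWN', mul_assoc]
    have h1 : c * trace (N' * Yh) = c * trace (N' * W) := by
      have h2 := congrArg trace hkey
      rw [trace_smul, trace_sub, trace_smul, htrNN', sub_zero] at h2
      simpa [smul_eq_mul] using h2
    have h2 : trace (N' * Yh) = trace (N' * W) := mul_left_cancel₀ hc h1
    rw [hYh'W, mul_sub, trace_sub, h2, sub_self]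
  have e2 : ∀ (D YY : V n), Dᵀ = D → trace (D * (YY + YYᵀ)) = 2 * trace (D * YY) := by
    intro D YY hD
    rw [mul_add, trace_add]
    have h3 : trace (D * YYᵀ) = trace (D * YY) := by
      rw [← trace_transpose (D * YYᵀ), transpose_mul, transpose_transpose, hD, trace_mul_comm]
    rw [h3]; ring
  have e3 : trace (C * S) = 0 := by
    calc trace (C * S) = trace ((N * S) * B) := by rw [hC, mul_assoc, trace_mul_comm]
    _ = trace (N * Yh) := by rw [hYhdef, mul_assoc]
    _ = 0 := htrNYh
  have e4 : trace (C' * S') = 0 := by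
    calc trace (C' * S') = trace ((N' * S') * B) := by rw [hC', mul_assoc, trace_mul_comm]
    _ = trace (N' * Yh') := by rw [hYh'def, mul_assoc]
    _ = 0 := htrN'Yh'
  have f1 : trace (C * Y) = 0 := by
    have h4 := e2 C Y hCs
    rw [← hSdef, e3] at h4
    linarith
  have f2 : trace (C' * Y') = 0 := by
    have h4 := e2 C' Y' hC's
    rw [← hS'def, e4] at h4
    linarith
  apply hφt
  rw [hφ, transpose_smul, smul_mul_assoc, trace_smul, transpose_smul, smul_mul_assoc,
    trace_smul, hCs, hC's, f1, f2]
  simp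

end Aux

/-- If the regular symmetric pencil `(A,B)` (with `B` invertible) has
exactly the two generalized eigenvalues `λ ≠ λ'`, and `C = A - λB`, `C' = A - λ'B`, then
for all `s, s' > 0` there exists `g` with `det g > 0`, `gᵀ C g = s·C` and
`gᵀ C' g = s'·C'`. -/
theorem two_eigenvalue_pencil_congruence
    (n : ℕ) (A B : Matrix (Fin n) (Fin n) ℝ) (hA : A.IsSymm) (hB : B.IsSymm)
    (hBinv : IsUnit B.det) (lam lam' : ℝ) (hne : lam ≠ lam')
    (heig : ∀ z : ℂ,
      ((A.map (Complex.ofReal)) - z • (B.map (Complex.ofReal))).det = 0 →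
        z = (lam : ℂ) ∨ z = (lam' : ℂ)) :
    ∀ s : ℝ, 0 < s → ∀ s' : ℝ, 0 < s' →
      ∃ g : Matrix (Fin n) (Fin n) ℝ, 0 < g.det ∧
        gᵀ * (A - lam • B) * g = s • (A - lam • B) ∧
        gᵀ * (A - lam' • B) * g = s' • (A - lam' • B) := by
  intro s hs s' hs'
  set N : Matrix (Fin n) (Fin n) ℝ := B⁻¹ * A - lam • 1 with hNdef
  set N' : Matrix (Fin n) (Fin n) ℝ := B⁻¹ * A - lam' • 1 with hN'def
  have hBB : B * B⁻¹ = 1 := Matrix.mul_nonsing_inv B hBinv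
  have hBN : B * N = A - lam • B := by
    rw [hNdef, mul_sub, ← mul_assoc, hBB, one_mul, mul_smul_comm, mul_one]
  have hBN' : B * N' = A - lam' • B := by
    rw [hN'def, mul_sub, ← mul_assoc, hBB, one_mul, mul_smul_comm, mul_one]
  have hCs : (B * N)ᵀ = B * N := by
    rw [hBN, transpose_sub, transpose_smul, hA.eq, hB.eq]
  have hC's : (B * N')ᵀ = B * N' := by
    rw [hBN', transpose_sub, transpose_smul, hA.eq, hB.eq]
  have hc : lam' - lam ≠ 0 := sub_ne_zero.mpr (Ne.symm hne)
  have hN' : N' = N - (lam' - lam) • 1 := by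
    rw [hNdef, hN'def, sub_smul]; abel
  have hP : IsNilpotent (N * N') := by
    refine ⟨n, ?_⟩
    have h := nilpotent_aux A B hBinv lam lam' hne heig
    rw [hNdef, hN'def]
    exact h
  obtain ⟨X, hX1, hX2⟩ := solvable_aux B N N' hBinv hCs hC's (lam' - lam) hc hN' hP
    (Real.log s) (Real.log s')
  refine ⟨exp X, det_exp_pos X, ?_, ?_⟩
  · have := exp_congr_aux (B * N) X (Real.log s) hX1
    rwa [hBN, Real.exp_log hs] at this
  · have := exp_congr_aux (B * N') X (Real.log s') hX2
    rwa [hBN', Real.exp_log hs'] at this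
end

section
/- Let k ≥ 3 and let λ_1 < λ_2 < ⋯ < λ_k be real numbers; take indices cyclically modulo k and write d_i = λ_{i+1} − λ_i and s_i = λ_{i+1} + λ_i. Then the following two inequalities hold: (a) Σ_{1 ≤ i ≠ j ≤ k} (s_i − s_j)² / (d_i·d_j) > 0; and (b) Σ_{i=1}^k (2 + s_i)² / d_i > 0. -/
/-- Auxiliary facts: `∑ 1/dᵢ > 0` and `∑ (t+sᵢ)²/dᵢ > 0` for every `t`. -/
lemma cyclic_difference_aux
    (k : ℕ) (hk : 3 ≤ k) (lam : Fin k → ℝ) (hmono : StrictMono lam)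
    (d s : Fin k → ℝ)
    (hd : ∀ i, d i = lam (i + ⟨1, lt_of_lt_of_le (by norm_num) hk⟩) - lam i)
    (hs : ∀ i, s i = lam (i + ⟨1, lt_of_lt_of_le (by norm_num) hk⟩) + lam i) :
    (0 < ∑ i : Fin k, 1 / d i) ∧
    (∀ t : ℝ, 0 < ∑ i : Fin k, (t + s i) ^ 2 / d i) := by
  have hk0 : 0 < k := by omega
  haveI : NeZero k := ⟨by omega⟩
  have h1k : 1 < k := by omega
  have h0k : 0 < k := by omega
  have hk1k : k - 1 < k := by omega
  set one : Fin k := ⟨1, h1k⟩ with hone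
  set z : Fin k := ⟨0, h0k⟩ with hz
  set last : Fin k := ⟨k - 1, hk1k⟩ with hlast
  have hone_val : one.val = 1 := rfl
  have hz_val : z.val = 0 := rfl
  have hlast_val : last.val = k - 1 := rfl
  have hd' : ∀ i, d i = lam (i + one) - lam i := hd
  have hs' : ∀ i, s i = lam (i + one) + lam i := hs
  -- shift sums
  have hshift : ∀ f : Fin k → ℝ, (∑ i : Fin k, f (i + one)) = ∑ i : Fin k, f i := by
    intro f
    exact Fintype.sum_equiv (Equiv.addRight one) _ _ (fun i => rfl)
  have hsumd : (∑ i : Fin k, d i) = 0 := by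
    have h : (∑ i : Fin k, d i) = (∑ i : Fin k, lam (i + one)) - ∑ i : Fin k, lam i := by
      rw [← Finset.sum_sub_distrib]
      exact Finset.sum_congr rfl fun i _ => hd' i
    rw [h, hshift lam, sub_self]
  have hsumsd : (∑ i : Fin k, s i * d i) = 0 := by
    have h : (∑ i : Fin k, s i * d i)
        = (∑ i : Fin k, (lam (i + one)) ^ 2) - ∑ i : Fin k, (lam i) ^ 2 := by
      rw [← Finset.sum_sub_distrib]
      refine Finset.sum_congr rfl fun i _ => ?_
      rw [hs' i, hd' i]; ring
    rw [h, hshift (fun i => (lam i) ^ 2), sub_self]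
  -- successor values
  have hsucc : ∀ i : Fin k, i ≠ last → ∃ h : i.val + 1 < k, (i + one) = ⟨i.val + 1, h⟩ := by
    intro i hi
    have hv : i.val ≠ k - 1 := fun h => hi (Fin.ext h)
    have hik := i.isLt
    have hlt : i.val + 1 < k := by omega
    refine ⟨hlt, Fin.ext ?_⟩
    show (i.val + one.val) % k = i.val + 1
    rw [hone_val, Nat.mod_eq_of_lt hlt]
  have hlastsucc : last + one = z := by
    apply Fin.ext
    show (k - 1 + 1) % k = 0
    rw [Nat.sub_add_cancel (by omega), Nat.mod_self]
  have hdpos : ∀ i : Fin k, i ≠ last → 0 < d i := by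
    intro i hi
    obtain ⟨hlt, hsu⟩ := hsucc i hi
    rw [hd' i, hsu, sub_pos]
    exact hmono (by rw [Fin.lt_def]; exact Nat.lt_succ_self _)
  have hdlast : d last = lam z - lam last := by rw [hd' last, hlastsucc]
  set D : ℝ := lam last - lam z with hD
  have hDpos : 0 < D := by
    rw [hD, sub_pos]
    exact hmono (by rw [Fin.lt_def, hz_val, hlast_val]; omega)
  have hDne : D ≠ 0 := hDpos.ne'
  have hdlastneg : d last = -D := by rw [hdlast, hD]; ring
  set T : Finset (Fin k) := Finset.univ.erase last with hT
  have hmemT : ∀ i : Fin k, i ∈ T ↔ i ≠ last := by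
    intro i; simp [hT]
  have hTd : ∀ i ∈ T, 0 < d i := fun i hi => hdpos i ((hmemT i).1 hi)
  have hTcard : T.card = k - 1 := by
    rw [hT, Finset.card_erase_of_mem (Finset.mem_univ _), Finset.card_univ, Fintype.card_fin]
  have hsplit : ∀ f : Fin k → ℝ, (∑ i ∈ T, f i) + f last = ∑ i : Fin k, f i := by
    intro f
    exact Finset.sum_erase_add _ _ (Finset.mem_univ _)
  have hsumTd : (∑ i ∈ T, d i) = D := by
    have h := hsplit d
    rw [hsumd, hdlastneg] at h
    linarith
  -- strict cube bound
  have hdltD : ∀ i ∈ T, d i < D := by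
    intro i hi
    obtain ⟨j, hj, hji⟩ := Finset.exists_mem_ne (s := T) (by omega) i
    have hjmem : j ∈ T.erase i := Finset.mem_erase.2 ⟨hji, hj⟩
    have hpos : 0 < ∑ x ∈ T.erase i, d x :=
      Finset.sum_pos (fun x hx => hTd x (Finset.mem_of_mem_erase hx)) ⟨j, hjmem⟩
    have h : d i + ∑ x ∈ T.erase i, d x = D := by
      rw [Finset.add_sum_erase _ _ hi, hsumTd]
    linarith
  have hTne : T.Nonempty := Finset.card_pos.1 (by omega)
  have hcube : (∑ i ∈ T, (d i) ^ 3) < D ^ 3 := by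
    have h1 : (∑ i ∈ T, (d i) ^ 3) < ∑ i ∈ T, d i * D ^ 2 := by
      refine Finset.sum_lt_sum_of_nonempty hTne fun i hi => ?_
      have h0 := hTd i hi
      have h1 := hdltD i hi
      have hsq : d i ^ 2 < D ^ 2 := by nlinarith
      nlinarith [mul_lt_mul_of_pos_left hsq h0]
    have h2 : (∑ i ∈ T, d i * D ^ 2) = D ^ 3 := by
      rw [← Finset.sum_mul, hsumTd]; ring
    linarith
  have hcubepos : 0 < ∑ i ∈ T, (d i) ^ 3 :=
    Finset.sum_pos (fun i hi => pow_pos (hTd i hi) 3) hTne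
  constructor
  · -- `A > 0`
    have hengel := Finset.sq_sum_div_le_sum_sq_div T (fun _ => (1 : ℝ)) hTd
    rw [hsumTd] at hengel
    have hcards : (∑ _i ∈ T, (1 : ℝ)) = ((k - 1 : ℕ) : ℝ) := by
      rw [Finset.sum_const, hTcard]; simp
    have hones : (∑ i ∈ T, (1 : ℝ) ^ 2 / d i) = ∑ i ∈ T, 1 / d i := by
      refine Finset.sum_congr rfl fun i _ => by norm_num
    rw [hcards, hones] at hengel
    have hk1 : (2 : ℝ) ≤ ((k - 1 : ℕ) : ℝ) := by
      have h : 2 ≤ k - 1 := by omega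
      exact_mod_cast h
    have h4 : (1 : ℝ) / D < ((k - 1 : ℕ) : ℝ) ^ 2 / D := by
      rw [div_lt_div_iff₀ hDpos hDpos]
      have h9 : (1 : ℝ) < ((k - 1 : ℕ) : ℝ) ^ 2 := by nlinarith
      nlinarith [mul_lt_mul_of_pos_right h9 hDpos]
    have hTpos : (1 : ℝ) / D < ∑ i ∈ T, 1 / d i := lt_of_lt_of_le h4 hengel
    have hfin := hsplit (fun i => 1 / d i)
    rw [hdlastneg] at hfin
    have hlast1 : (1 : ℝ) / (-D) = -(1 / D) := by field_simp
    rw [hlast1] at hfin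
    linarith
  · -- `Q(t) > 0`
    intro t
    have hsumad : (∑ i : Fin k, (t + s i) * d i) = 0 := by
      have h : (∑ i : Fin k, (t + s i) * d i)
          = t * (∑ i : Fin k, d i) + ∑ i : Fin k, s i * d i := by
        rw [Finset.mul_sum, ← Finset.sum_add_distrib]
        exact Finset.sum_congr rfl fun i _ => by ring
      rw [h, hsumd, hsumsd]; ring
    set L : ℝ := t + s last with hL
    have hTad : (∑ i ∈ T, (t + s i) * d i) = L * D := by
      have h := hsplit (fun i => (t + s i) * d i)
      rw [hsumad, hdlastneg] at h
      have : (∑ i ∈ T, (t + s i) * d i) + (t + s last) * -D = 0 := h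
      rw [← hL] at this
      linarith [this]
    have hfin := hsplit (fun i => (t + s i) ^ 2 / d i)
    rw [hdlastneg] at hfin
    have hlastterm : (t + s last) ^ 2 / (-D) = -(L ^ 2 / D) := by
      rw [← hL, div_neg]
    rw [hlastterm] at hfin
    have hTsum_eq : (∑ i ∈ T, ((t + s i) * d i) ^ 2 / (d i) ^ 3)
        = ∑ i ∈ T, (t + s i) ^ 2 / d i := by
      refine Finset.sum_congr rfl fun i hi => ?_
      have hne : d i ≠ 0 := (hTd i hi).ne'
      field_simp
    rcases eq_or_ne L 0 with hL0 | hL0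
    · -- boundary case: positive part is strictly positive
      have h2k : 2 < k := by omega
      have hzT : z ∈ T := (hmemT z).2 (by
        intro h
        have := congrArg Fin.val h
        rw [hz_val, hlast_val] at this
        omega)
      have honeT : one ∈ T := (hmemT one).2 (by
        intro h
        have := congrArg Fin.val h
        rw [hone_val, hlast_val] at this
        omega)
      have hzone : z + one = one := by
        apply Fin.ext
        show (0 + 1) % k = 1
        rw [Nat.mod_eq_of_lt (by omega)]
      have honeone : one + one = ⟨2, h2k⟩ := by
        apply Fin.ext
        show (1 + 1) % k = 2
        rw [Nat.mod_eq_of_lt (by omega)]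
      have hsz : s z = lam one + lam z := by rw [hs' z, hzone]
      have hsone : s one = lam ⟨2, h2k⟩ + lam one := by rw [hs' one, honeone]
      have hslt : s z < s one := by
        rw [hsz, hsone]
        have := hmono (show z < (⟨2, h2k⟩ : Fin k) by rw [Fin.lt_def]; show (0:ℕ) < 2; omega)
        linarith
      obtain ⟨i0, hi0T, hi0⟩ : ∃ i0, i0 ∈ T ∧ t + s i0 ≠ 0 := by
        rcases eq_or_ne (t + s z) 0 with h0 | h0
        · exact ⟨one, honeT, by intro h; rw [← h0] at h; have := add_left_cancel h; linarith⟩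
        · exact ⟨z, hzT, h0⟩
      have hpos : 0 < ∑ i ∈ T, (t + s i) ^ 2 / d i := by
        refine Finset.sum_pos' (fun i hi => div_nonneg (sq_nonneg _) (hTd i hi).le)
          ⟨i0, hi0T, div_pos ?_ (hTd i0 hi0T)⟩
        exact (sq_nonneg _).lt_of_ne (Ne.symm (pow_ne_zero _ hi0))
      rw [hL0] at hfin
      simp at hfin
      linarith
    · -- main case: Cauchy–Schwarz (Engel form)
      have hengel := Finset.sq_sum_div_le_sum_sq_div T (fun i => (t + s i) * d i)
        (g := fun i => (d i) ^ 3) (fun i hi => pow_pos (hTd i hi) 3)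
      rw [hTad, hTsum_eq] at hengel
      have hLD : (0 : ℝ) < (L * D) ^ 2 := by
        have : L * D ≠ 0 := mul_ne_zero hL0 hDne
        exact (sq_nonneg _).lt_of_ne (Ne.symm (pow_ne_zero _ this))
      have hstep : L ^ 2 / D < (L * D) ^ 2 / (∑ i ∈ T, (d i) ^ 3) := by
        have he : L ^ 2 / D = (L * D) ^ 2 / D ^ 3 := by
          field_simp
        rw [he]
        exact div_lt_div_of_pos_left hLD hcubepos hcube
      have hkey : L ^ 2 / D < ∑ i ∈ T, (t + s i) ^ 2 / d i :=
        lt_of_lt_of_le hstep hengel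
      linarith

/-- For `k ≥ 3` and `λ_1 < ⋯ < λ_k`, with cyclic differences
`d_i = λ_{i+1} - λ_i` and sums `s_i = λ_{i+1} + λ_i`, one has
`∑_{i ≠ j} (s_i - s_j)²/(d_i d_j) > 0` and `∑_i (2 + s_i)²/d_i > 0`. -/
theorem cyclic_difference_inequalities
    (k : ℕ) (hk : 3 ≤ k) (lam : Fin k → ℝ) (hmono : StrictMono lam)
    (d s : Fin k → ℝ)
    (hd : ∀ i, d i = lam (i + ⟨1, by omega⟩) - lam i)
    (hs : ∀ i, s i = lam (i + ⟨1, by omega⟩) + lam i) :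
    (0 < ∑ i : Fin k, ∑ j : Fin k,
        (if i = j then 0 else (s i - s j) ^ 2 / (d i * d j))) ∧
    (0 < ∑ i : Fin k, (2 + s i) ^ 2 / d i) := by
  obtain ⟨hA, hQ⟩ := cyclic_difference_aux k hk lam hmono d s hd hs
  set A : ℝ := ∑ i : Fin k, 1 / d i with hAdef
  set B : ℝ := ∑ i : Fin k, s i / d i with hBdef
  set C : ℝ := ∑ i : Fin k, (s i) ^ 2 / d i with hCdef
  have hABC : ∀ t : ℝ, (∑ i : Fin k, (t + s i) ^ 2 / d i) = A * t ^ 2 + 2 * B * t + C := by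
    intro t
    have h : ∀ i : Fin k, (t + s i) ^ 2 / d i
        = t ^ 2 * (1 / d i) + (2 * t) * (s i / d i) + (s i) ^ 2 / d i := fun i => by ring
    rw [Finset.sum_congr rfl (fun i _ => h i), Finset.sum_add_distrib, Finset.sum_add_distrib,
      ← Finset.mul_sum, ← Finset.mul_sum, ← hAdef, ← hBdef, ← hCdef]
    ring
  have hQ' : ∀ t : ℝ, 0 < A * t ^ 2 + 2 * B * t + C := fun t => hABC t ▸ hQ t
  have hdisc : B ^ 2 < A * C := by
    have h := hQ' (-(B / A))
    have he : A * (-(B / A)) ^ 2 + 2 * B * (-(B / A)) + C = C - B ^ 2 / A := by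
      field_simp
      ring
    rw [he] at h
    have h2 : B ^ 2 / A < C := by linarith
    have := (div_lt_iff₀ hA).1 h2
    nlinarith
  constructor
  · have hite : ∀ i j : Fin k,
        (if i = j then 0 else (s i - s j) ^ 2 / (d i * d j))
          = (s i - s j) ^ 2 / (d i * d j) := by
      intro i j
      rcases eq_or_ne i j with h | h
      · rw [if_pos h]; subst h; simp
      · rw [if_neg h]
    have hexp : ∀ i j : Fin k, (s i - s j) ^ 2 / (d i * d j)
        = ((s i) ^ 2 / d i) * (1 / d j) - (2 * (s i / d i)) * (s j / d j)
          + (1 / d i) * ((s j) ^ 2 / d j) := fun i j => by ring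
    have hsum : (∑ i : Fin k, ∑ j : Fin k,
        (if i = j then 0 else (s i - s j) ^ 2 / (d i * d j)))
        = C * A - 2 * B * B + A * C := by
      calc (∑ i : Fin k, ∑ j : Fin k,
            (if i = j then 0 else (s i - s j) ^ 2 / (d i * d j)))
          = ∑ i : Fin k, (((s i) ^ 2 / d i) * A - (2 * (s i / d i)) * B
              + (1 / d i) * C) := by
            refine Finset.sum_congr rfl fun i _ => ?_
            rw [Finset.sum_congr rfl (fun j _ => (hite i j).trans (hexp i j)),
              Finset.sum_add_distrib, Finset.sum_sub_distrib,
              ← Finset.mul_sum, ← Finset.mul_sum, ← Finset.mul_sum,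
              ← hAdef, ← hBdef, ← hCdef]
        _ = C * A - 2 * B * B + A * C := by
            rw [Finset.sum_add_distrib, Finset.sum_sub_distrib,
              ← Finset.sum_mul, ← Finset.sum_mul, ← Finset.sum_mul,
              ← Finset.mul_sum, ← hAdef, ← hBdef, ← hCdef]
    rw [hsum]
    nlinarith
  · exact hQ 2
end

section
/- Let n ≥ 2, t ∈ (0,1), and L ≥ 1 be real numbers, let I be a subset of {1, …, n}, and let x_1, …, x_n be positive real numbers with x_1·⋯·x_n = 1 such that: 0 < x_i < 1 for every i ∈ I, x_i > 1 for every i ∉ I, I is nonempty and proper, min_{1≤i≤n} |log x_i| ≥ t · max_{1≤i≤n} |log x_i|, and Σ_{i=1}^n x_i ≥ L. Then for every i ∈ I and every j ∉ I, |x_i^{−1} − 1| ≥ t·((L − 1)/(n − 1))^t · |x_j^{−1} − 1|. -/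
/-- For a point `diag(x_1, …, x_n)` of the model flat lying in the
truncated chamber `Δ^I_t` with Selberg invariant at least `L` from the identity, one has
`|x_i⁻¹ - 1| ≥ t·((L-1)/(n-1))^t · |x_j⁻¹ - 1|` for all `i ∈ I`, `j ∉ I`. -/
theorem truncated_chamber_entry_ratio_bound
    (n : ℕ) (hn : 2 ≤ n) (t L : ℝ) (ht0 : 0 < t) (ht1 : t < 1) (hL : 1 ≤ L)
    (I : Set (Fin n)) (x : Fin n → ℝ)
    (hxpos : ∀ i, 0 < x i) (hprod : ∏ i, x i = 1)
    (hxI : ∀ i ∈ I, x i < 1) (hxIc : ∀ i ∉ I, 1 < x i)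
    (hIne : I.Nonempty) (hIproper : I ≠ Set.univ)
    (hchamber : ∀ i j : Fin n, |Real.log (x i)| ≥ t * |Real.log (x j)|)
    (hsum : L ≤ ∑ i, x i) :
    ∀ i ∈ I, ∀ j ∉ I,
      |(x i)⁻¹ - 1| ≥ t * ((L - 1) / ((n : ℝ) - 1)) ^ t * |(x j)⁻¹ - 1| := by
  intro i hi j hj
  -- the maximum entry
  obtain ⟨k, -, hk⟩ := Finset.exists_max_image (Finset.univ : Finset (Fin n)) x
    ⟨i, Finset.mem_univ i⟩
  simp only [Finset.mem_univ, forall_true_left, true_implies] at hk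
  have hkmax : ∀ m, x m ≤ x k := fun m => hk m
  set M := x k with hM
  have hMj : x j ≤ M := hkmax j
  have hM1 : 1 < M := lt_of_lt_of_le (hxIc j hj) hMj
  have hM0 : 0 < M := lt_trans one_pos hM1
  have hn1 : (0:ℝ) < (n:ℝ) - 1 := by
    have : (2:ℝ) ≤ (n:ℝ) := by exact_mod_cast hn
    linarith
  -- sum bound : L ≤ 1 + (n-1) M
  have hsumM : L ≤ 1 + ((n:ℝ) - 1) * M := by
    have hsplit : ∑ m, x m = x i + ∑ m ∈ Finset.univ.erase i, x m := by
      rw [Finset.add_sum_erase _ _ (Finset.mem_univ i)]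
    have hbound : ∑ m ∈ Finset.univ.erase i, x m ≤ ((n:ℝ) - 1) * M := by
      have h1 : ∑ m ∈ Finset.univ.erase i, x m
          ≤ ∑ _m ∈ Finset.univ.erase i, M :=
        Finset.sum_le_sum fun m _ => hkmax m
      have h2 : ∑ _m ∈ Finset.univ.erase i, M
          = ((n:ℝ) - 1) * M := by
        rw [Finset.sum_const, Finset.card_erase_of_mem (Finset.mem_univ i),
          Finset.card_univ, Fintype.card_fin, nsmul_eq_mul]
        push_cast [Nat.cast_sub (le_trans one_le_two hn)]
        ring
      linarith
    have hxi1 : x i < 1 := hxI i hi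
    linarith
  have hcM : (L - 1) / ((n:ℝ) - 1) ≤ M := by
    rw [div_le_iff₀ hn1]; linarith [mul_comm M ((n:ℝ) - 1)]
  have hc0 : 0 ≤ (L - 1) / ((n:ℝ) - 1) := div_nonneg (by linarith) hn1.le
  -- x i⁻¹ ≥ M ^ t
  have hxi1 : x i < 1 := hxI i hi
  have hxipos := hxpos i
  have hlogi : Real.log (x i) < 0 := Real.log_neg hxipos hxi1
  have hlogM : 0 < Real.log M := Real.log_pos hM1
  have hcham := hchamber i k
  rw [abs_of_neg hlogi, abs_of_pos hlogM] at hcham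
  have hinv : M ^ t ≤ (x i)⁻¹ := by
    rw [← Real.exp_log (inv_pos.mpr hxipos), Real.log_inv,
      ← Real.exp_log hM0, ← Real.exp_mul]
    exact Real.exp_le_exp.mpr (by linarith [mul_comm t (Real.log M)])
  -- Bernoulli : M⁻¹ ^ t ≤ 1 + t * (M⁻¹ - 1)
  have hbern : (M⁻¹) ^ t ≤ 1 + t * (M⁻¹ - 1) := by
    have hs : (-1:ℝ) ≤ M⁻¹ - 1 := by
      have : (0:ℝ) < M⁻¹ := inv_pos.mpr hM0
      linarith
    have := rpow_one_add_le_one_add_mul_self hs ht0.le ht1.le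
    simpa using this
  -- hence M^t - 1 ≥ t * M^t * (1 - M⁻¹)
  have hMt0 : 0 < M ^ t := Real.rpow_pos_of_pos hM0 t
  have hkey : t * M ^ t * (1 - M⁻¹) ≤ M ^ t - 1 := by
    have h1 : M ^ t * (M⁻¹ ^ t) = 1 := by
      rw [← Real.mul_rpow hM0.le (inv_pos.mpr hM0).le, mul_inv_cancel₀ hM0.ne',
        Real.one_rpow]
    have h2 : M ^ t * (M⁻¹ ^ t) ≤ M ^ t * (1 + t * (M⁻¹ - 1)) := by
      exact mul_le_mul_of_nonneg_left hbern hMt0.le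
    rw [h1] at h2
    nlinarith
  -- compare with c := (L-1)/(n-1) and x j
  have hcMt : ((L - 1) / ((n:ℝ) - 1)) ^ t ≤ M ^ t :=
    Real.rpow_le_rpow hc0 hcM ht0.le
  have hxj1 : 1 < x j := hxIc j hj
  have hxjinv : (x j)⁻¹ ≤ 1 := by
    rw [inv_le_one_iff₀]; right; exact hxj1.le
  have hMinvxj : M⁻¹ ≤ (x j)⁻¹ := by
    apply inv_anti₀ (hxpos j) hMj
  have hfac : (1 - (x j)⁻¹) ≤ (1 - M⁻¹) := by linarith
  have h1xj : 0 ≤ 1 - (x j)⁻¹ := by linarith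
  have hc0t : 0 ≤ ((L - 1) / ((n:ℝ) - 1)) ^ t := Real.rpow_nonneg hc0 t
  -- chain
  have hchain : t * ((L - 1) / ((n:ℝ) - 1)) ^ t * (1 - (x j)⁻¹)
      ≤ t * M ^ t * (1 - M⁻¹) := by
    apply mul_le_mul
    · exact mul_le_mul_of_nonneg_left hcMt ht0.le
    · exact hfac
    · exact h1xj
    · positivity
  have habsj : |(x j)⁻¹ - 1| = 1 - (x j)⁻¹ := by
    rw [abs_of_nonpos (by linarith)]; ring
  have habsi : |(x i)⁻¹ - 1| = (x i)⁻¹ - 1 := by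
    rw [abs_of_nonneg]
    have : 1 < (x i)⁻¹ := (one_lt_inv_iff₀).mpr ⟨hxipos, hxi1⟩
    linarith
  rw [habsi, habsj, ge_iff_le]
  calc t * ((L - 1) / ((n:ℝ) - 1)) ^ t * (1 - (x j)⁻¹)
      ≤ t * M ^ t * (1 - M⁻¹) := hchain
    _ ≤ M ^ t - 1 := hkey
    _ ≤ (x i)⁻¹ - 1 := by linarith
end

section
/- Let γ be the 3×3 real matrix with rows (1,1,0), (0,1,0), (0,0,1) (a unipotent element of SL(3,ℝ)). For every X ∈ 𝒫(3), every A ∈ 𝒫(3), and every integer k₀: if s(γᵏ.X, A) ≥ s(X, A) for all integers k, and s(γ^{k₀}.X, A) = s(X, A), then k₀ ∈ {−1, 0, 1}. (Hence the Dirichlet–Selberg domain of the cyclic group generated by γ centered at any X ∈ 𝒫(3) has at most two facets.) -/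
open Matrix

namespace Stmt14

/-- Membership in `𝒫(3)`: symmetric positive definite of determinant 1. -/
def PD3 (X : Matrix (Fin 3) (Fin 3) ℝ) : Prop := X.PosDef ∧ X.det = 1

/-- Selberg's invariant `s(X,Y) = tr(X⁻¹·Y)`. -/
noncomputable def sel (X Y : Matrix (Fin 3) (Fin 3) ℝ) : ℝ := (X⁻¹ * Y).trace

/-- The action `g.X = gᵀ·X·g`. -/
def act (g X : Matrix (Fin 3) (Fin 3) ℝ) : Matrix (Fin 3) (Fin 3) ℝ := gᵀ * X * g

/-- The unipotent element `γ` with rows `(1,1,0), (0,1,0), (0,0,1)`, as a unit of the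
matrix ring (so that integer powers are available). -/
def gam : (Matrix (Fin 3) (Fin 3) ℝ)ˣ :=
  ⟨!![1, 1, 0; 0, 1, 0; 0, 0, 1], !![1, -1, 0; 0, 1, 0; 0, 0, 1],
    by simp [Matrix.mul_fin_three, Matrix.one_fin_three],
    by simp [Matrix.mul_fin_three, Matrix.one_fin_three]⟩

/-- The one-parameter family containing the powers of `γ`. -/
def G (t : ℝ) : Matrix (Fin 3) (Fin 3) ℝ := !![1, t, 0; 0, 1, 0; 0, 0, 1]

lemma G_mul (s t : ℝ) : G s * G t = G (s + t) := by
  simp [G, Matrix.mul_fin_three]; ring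

lemma G_transpose (t : ℝ) : (G t)ᵀ = !![1, 0, 0; t, 1, 0; 0, 0, 1] := by
  ext i j; fin_cases i <;> fin_cases j <;> simp [G, Matrix.vecHead, Matrix.vecTail]

lemma G_zero : G 0 = 1 := by
  simp [G, Matrix.one_fin_three]

lemma G_inv (t : ℝ) : (G t)⁻¹ = G (-t) := by
  apply Matrix.inv_eq_right_inv
  rw [G_mul]; simp [G_zero]

lemma gam_zpow (k : ℤ) : ((gam ^ k : (Matrix (Fin 3) (Fin 3) ℝ)ˣ) : Matrix (Fin 3) (Fin 3) ℝ)
    = G (k : ℝ) := by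
  induction k using Int.induction_on with
  | zero => simp [G_zero]
  | succ n ih =>
      rw [_root_.zpow_add_one, Units.val_mul, ih]
      have : (gam : Matrix (Fin 3) (Fin 3) ℝ) = G 1 := rfl
      rw [this, G_mul]; push_cast; ring_nf
  | pred n ih =>
      rw [_root_.zpow_sub_one, Units.val_mul, ih]
      have : ((gam⁻¹ : (Matrix (Fin 3) (Fin 3) ℝ)ˣ) : Matrix (Fin 3) (Fin 3) ℝ) = G (-1) := rfl
      rw [this, G_mul]; push_cast; ring_nf

lemma diag_pos {M : Matrix (Fin 3) (Fin 3) ℝ} (hM : M.PosDef) (i : Fin 3) : 0 < M i i := by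
  exact hM.diag_pos

lemma trace_formula (B A : Matrix (Fin 3) (Fin 3) ℝ) (t : ℝ) :
    (G t * B * (G t)ᵀ * A).trace
      = (B * A).trace + t * ((B * A) 1 0 + (A * B) 0 1) + t ^ 2 * (B 1 1 * A 0 0) := by
  rw [G_transpose]
  simp [G, Matrix.trace_fin_three, Matrix.mul_apply, Matrix.vecMul, dotProduct,
    Fin.sum_univ_three, Matrix.vecHead, Matrix.vecTail]
  ring

lemma sel_act (X A : Matrix (Fin 3) (Fin 3) ℝ) (t : ℝ) :
    sel (act (G t) X) A = (G (-t) * X⁻¹ * (G (-t))ᵀ * A).trace := by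
  unfold sel act
  rw [Matrix.mul_inv_rev, Matrix.mul_inv_rev, ← Matrix.transpose_nonsing_inv, G_inv]
  simp [Matrix.mul_assoc]

/-- if the Selberg invariant `s(γᵏ.X, A)` is minimized over `k ∈ ℤ` at
`k = 0` and also attains this minimum at `k₀`, then `k₀ ∈ {-1, 0, 1}`; hence the
Dirichlet–Selberg domain of `⟨γ⟩` has at most two facets. -/
theorem cyclic_type_one_at_most_two_facets
    (X A : Matrix (Fin 3) (Fin 3) ℝ) (hX : PD3 X) (hA : PD3 A) (k₀ : ℤ)
    (hmin : ∀ k : ℤ, sel X A ≤ sel (act (↑(gam ^ k)) X) A)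
    (heq : sel (act (↑(gam ^ k₀)) X) A = sel X A) :
    k₀ = -1 ∨ k₀ = 0 ∨ k₀ = 1 := by
  set B := X⁻¹ with hB
  have hBpd : B.PosDef := hX.1.inv
  have ha : 0 < B 1 1 * A 0 0 := mul_pos (diag_pos hBpd 1) (diag_pos hA.1 0)
  set a : ℝ := B 1 1 * A 0 0 with ha'
  set b : ℝ := (B * A) 1 0 + (A * B) 0 1 with hb'
  have hsel0 : sel X A = (B * A).trace := rfl
  have key : ∀ k : ℤ, sel (act (↑(gam ^ k)) X) A
      = (B * A).trace + (-(k : ℝ)) * b + (k : ℝ) ^ 2 * a := by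
    intro k
    rw [gam_zpow, sel_act, trace_formula]
    ring_nf
    simp only [hb', ha', hB]; ring
  have h1 := hmin 1
  have h2 := hmin (-1)
  rw [key, hsel0] at h1 h2
  rw [key, hsel0] at heq
  push_cast at h1 h2 heq
  -- h1 : 0 ≤ -b + a,  h2 : 0 ≤ b + a,  heq : -(k₀) b + k₀² a = 0
  by_contra hk
  push_neg at hk
  have hcase : 2 ≤ k₀ ∨ k₀ ≤ -2 := by omega
  rcases hcase with h | h
  · have hK : (2 : ℝ) ≤ (k₀ : ℝ) := by exact_mod_cast h
    nlinarith [mul_nonneg (by linarith : (0:ℝ) ≤ a - b) (by linarith : (0:ℝ) ≤ (k₀:ℝ) - 2),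
      mul_nonneg (by linarith : (0:ℝ) ≤ (k₀:ℝ) - 2) (by linarith : (0:ℝ) ≤ (k₀:ℝ) - 2)]
  · have hK : (k₀ : ℝ) ≤ -2 := by exact_mod_cast h
    nlinarith [mul_nonneg (by linarith : (0:ℝ) ≤ a + b) (by linarith : (0:ℝ) ≤ -(k₀:ℝ) - 2),
      mul_nonneg (by linarith : (0:ℝ) ≤ -(k₀:ℝ) - 2) (by linarith : (0:ℝ) ≤ -(k₀:ℝ) - 2)]

end Stmt14
end

section
/- Let γ be the 3×3 real matrix with rows (1,1,0), (0,1,1), (0,0,1) (a unipotent element of SL(3,ℝ) whose eigenvalue 1 has geometric multiplicity 1). For every X ∈ 𝒫(3) and every nonzero integer k₀ there exists A ∈ 𝒫(3) such that s(γ^{k₀}.X, A) = s(X, A) and s(γᵏ.X, A) > s(X, A) for every integer k ∉ {0, k₀}. (Hence the Dirichlet–Selberg domain of the cyclic group generated by γ centered at any X ∈ 𝒫(3) is infinitely-sided.) -/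
open Matrix

namespace Stmt15

/-- Membership in `𝒫(3)`: symmetric positive definite of determinant 1. -/
def PD3 (X : Matrix (Fin 3) (Fin 3) ℝ) : Prop := X.PosDef ∧ X.det = 1

/-- Selberg's invariant `s(X,Y) = tr(X⁻¹·Y)`. -/
noncomputable def sel (X Y : Matrix (Fin 3) (Fin 3) ℝ) : ℝ := (X⁻¹ * Y).trace

/-- The action `g.X = gᵀ·X·g`. -/
def act (g X : Matrix (Fin 3) (Fin 3) ℝ) : Matrix (Fin 3) (Fin 3) ℝ := gᵀ * X * g

/-- The unipotent element `γ` with rows `(1,1,0), (0,1,1), (0,0,1)` (geometric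
multiplicity 1 for the eigenvalue 1), as a unit of the matrix ring. -/
def gam : (Matrix (Fin 3) (Fin 3) ℝ)ˣ :=
  ⟨!![1, 1, 0; 0, 1, 1; 0, 0, 1], !![1, -1, 1; 0, 1, -1; 0, 0, 1],
    by simp [Matrix.mul_fin_three, Matrix.one_fin_three],
    by simp [Matrix.mul_fin_three, Matrix.one_fin_three]⟩

lemma posdef_LLT (L : Matrix (Fin 3) (Fin 3) ℝ) (hL : IsUnit L.det) : (L * Lᵀ).PosDef := by
  have hLT : Lᵀ = Lᴴ := by ext i j; simp [Matrix.conjTranspose_apply]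
  rw [hLT]
  refine Matrix.PosDef.of_dotProduct_mulVec_pos (Matrix.isHermitian_mul_conjTranspose_self L) fun x hx => ?_
  have hu : IsUnit Lᴴ := by
    rw [Matrix.isUnit_iff_isUnit_det, Matrix.det_conjTranspose]
    simpa using hL
  have hne : Lᴴ *ᵥ x ≠ 0 := fun h =>
    hx (Matrix.mulVec_injective_iff_isUnit.mpr hu (by simpa using h))
  calc (0:ℝ) < star (Lᴴ *ᵥ x) ⬝ᵥ (Lᴴ *ᵥ x) :=
        Matrix.dotProduct_star_self_pos_iff.mpr hne
    _ = star x ⬝ᵥ (L * Lᴴ) *ᵥ x := by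
        rw [star_mulVec, conjTranspose_conjTranspose, Matrix.dotProduct_mulVec,
          Matrix.vecMul_vecMul, ← Matrix.dotProduct_mulVec]

lemma gam_zpow (k : ℤ) : (↑(gam ^ k) : Matrix (Fin 3) (Fin 3) ℝ) =
    !![1, (k:ℝ), ((k:ℝ)*((k:ℝ)-1))/2; 0, 1, (k:ℝ); 0, 0, 1] := by
  induction k using Int.induction_on with
  | zero => rw [zpow_zero, Units.val_one, Matrix.one_fin_three]; norm_num
  | succ n ih =>
      rw [_root_.zpow_add_one, Units.val_mul, ih]
      rw [show (↑gam : Matrix (Fin 3) (Fin 3) ℝ) = !![1,1,0;0,1,1;0,0,1] from rfl]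
      ext i j
      fin_cases i <;> fin_cases j <;>
        simp [Matrix.mul_fin_three] <;> push_cast <;> ring
  | pred n ih =>
      rw [show (-(n:ℤ) - 1) = (-(n:ℤ)) + (-1) by ring, _root_.zpow_add,
        _root_.zpow_neg_one, Units.val_mul, ih]
      rw [show (↑gam⁻¹ : Matrix (Fin 3) (Fin 3) ℝ) = !![1,-1,1;0,1,-1;0,0,1] from rfl]
      ext i j
      fin_cases i <;> fin_cases j <;>
        simp [Matrix.mul_fin_three] <;> push_cast <;> ring

set_option maxHeartbeats 2000000 in
/-- for every `X ∈ 𝒫(3)` and every nonzero integer `k₀` there exists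
`A ∈ 𝒫(3)` whose Selberg invariant to the orbit `γᵏ.X` is minimized exactly at
`k ∈ {0, k₀}`; hence `DS(X, ⟨γ⟩)` is infinitely-sided. -/
theorem cyclic_type_two_infinitely_sided
    (X : Matrix (Fin 3) (Fin 3) ℝ) (hX : PD3 X) (k₀ : ℤ) (hk₀ : k₀ ≠ 0) :
    ∃ A : Matrix (Fin 3) (Fin 3) ℝ, PD3 A ∧
      sel (act (↑(gam ^ k₀)) X) A = sel X A ∧
      ∀ k : ℤ, k ≠ 0 → k ≠ k₀ → sel X A < sel (act (↑(gam ^ k)) X) A := by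
  obtain ⟨hXpd, hXdet⟩ := hX
  have hYpd : X⁻¹.PosDef := hXpd.inv
  have hherm : X⁻¹ᴴ = X⁻¹ := hYpd.1
  have hsym : ∀ i j : Fin 3, X⁻¹ j i = X⁻¹ i j := by
    intro i j
    conv_lhs => rw [← hherm]
    simp [Matrix.conjTranspose_apply]
  have hy33 : 0 < X⁻¹ 2 2 := by
    have h := hYpd.dotProduct_mulVec_pos (x := Pi.single 2 1) (by
      intro h
      simpa using congrFun h 2)
    simpa [Matrix.mulVec_single, dotProduct, Fin.sum_univ_three, Pi.single_apply] using h
  have hy33' : X⁻¹ 2 2 ≠ 0 := ne_of_gt hy33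
  -- abbreviations
  obtain ⟨y11, hy11⟩ : ∃ a : ℝ, a = X⁻¹ 0 0 := ⟨_, rfl⟩
  obtain ⟨y12, hy12⟩ : ∃ a : ℝ, a = X⁻¹ 0 1 := ⟨_, rfl⟩
  obtain ⟨y13, hy13⟩ : ∃ a : ℝ, a = X⁻¹ 0 2 := ⟨_, rfl⟩
  obtain ⟨y22, hy22⟩ : ∃ a : ℝ, a = X⁻¹ 1 1 := ⟨_, rfl⟩
  obtain ⟨y23, hy23⟩ : ∃ a : ℝ, a = X⁻¹ 1 2 := ⟨_, rfl⟩
  obtain ⟨y33, hy33eq⟩ : ∃ a : ℝ, a = X⁻¹ 2 2 := ⟨_, rfl⟩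
  have hYe : X⁻¹ = !![y11, y12, y13; y12, y22, y23; y13, y23, y33] := by
    rw [Matrix.eta_fin_three X⁻¹]
    rw [hsym 0 1, hsym 0 2, hsym 1 2, hy11, hy12, hy13, hy22, hy23, hy33eq]
  have hy33'' : y33 ≠ 0 := hy33eq ▸ hy33'
  set t : ℝ := (k₀ : ℝ) with ht
  obtain ⟨a12, ha12⟩ : ∃ a : ℝ, a = (1+t)/2 - y23/y33 := ⟨_, rfl⟩
  obtain ⟨a13, ha13⟩ : ∃ a : ℝ,
      a = t^2/4 - 1/4 - (y13+y22-y23)/y33 - 3*a12*y23/y33 + a12 - (a12^2+1) := ⟨_, rfl⟩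
  obtain ⟨b, hb⟩ : ∃ a : ℝ,
      a = (-2*y12 + y13 - 2*a12*y13 - 2*a12*y22 + a12*y23 - 2*a13*y23 + a13*y33
            - 2*(a12^2+1)*y23)/(2*y33) - a12*a13 := ⟨_, rfl⟩
  set L : Matrix (Fin 3) (Fin 3) ℝ := !![1,0,0; a12,1,0; a13,b,1] with hL
  have hdetL : L.det = 1 := by simp [hL, Matrix.det_fin_three]
  have hg : ∀ k : ℤ, (act (↑(gam ^ k)) X)⁻¹ = (↑(gam ^ (-k)) : Matrix (Fin 3) (Fin 3) ℝ) * X⁻¹ * (↑(gam ^ (-k)) : Matrix (Fin 3) (Fin 3) ℝ)ᵀ := by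
    intro k
    rw [act, Matrix.mul_inv_rev, Matrix.mul_inv_rev, ← Matrix.transpose_nonsing_inv,
      ← Matrix.coe_units_inv, ← _root_.zpow_neg, mul_assoc]
  have hLT : Lᵀ = !![1,a12,a13; 0,1,b; 0,0,1] := by
    rw [hL]; ext i j; fin_cases i <;> fin_cases j <;> simp [Matrix.vecHead, Matrix.vecTail]
  have key : ∀ k : ℤ, sel (act (↑(gam ^ k)) X) (L * Lᵀ)
      = sel X (L * Lᵀ) + y33/4 * ((k:ℝ)*((k:ℝ)-t))^2 := by
    intro k
    have hMT : (↑(gam ^ (-k)) : Matrix (Fin 3) (Fin 3) ℝ)ᵀ =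
        !![1, 0, 0; -(k:ℝ), 1, 0; ((k:ℝ)*((k:ℝ)+1))/2, -(k:ℝ), 1] := by
      rw [gam_zpow (-k)]; ext i j
      fin_cases i <;> fin_cases j <;> simp [Matrix.vecHead, Matrix.vecTail] <;> push_cast <;> ring
    have hM : (↑(gam ^ (-k)) : Matrix (Fin 3) (Fin 3) ℝ) =
        !![1, -(k:ℝ), ((k:ℝ)*((k:ℝ)+1))/2; 0, 1, -(k:ℝ); 0, 0, 1] := by
      rw [gam_zpow (-k)]; ext i j
      fin_cases i <;> fin_cases j <;> simp [Matrix.vecHead, Matrix.vecTail] <;> push_cast <;> ring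
    rw [sel, sel, hg k, hMT, hM, hYe, hL, hLT]
    simp only [Matrix.trace_fin_three, Matrix.mul_apply, Matrix.of_apply, Fin.sum_univ_three,
      Matrix.transpose_apply, Matrix.cons_val', Matrix.cons_val_zero, Matrix.cons_val_one,
      Matrix.head_cons, Matrix.empty_val', Matrix.cons_val_fin_one, Matrix.head_fin_const,
      Matrix.cons_val_two, Matrix.tail_cons]
    rw [hb, ha13, ha12]
    field_simp
    ring
  refine ⟨L * Lᵀ, ⟨posdef_LLT L (by rw [hdetL]; exact isUnit_one), by
      rw [Matrix.det_mul, Matrix.det_transpose, hdetL]; norm_num⟩, ?_, ?_⟩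

  · rw [key k₀]
    simp [ht]
  · intro k hk hkk
    rw [key k]
    have h1 : (0:ℝ) < y33/4 * ((k:ℝ)*((k:ℝ)-t))^2 := by
      have hk' : ((k:ℝ)) ≠ 0 := Int.cast_ne_zero.mpr hk
      have hkk' : ((k:ℝ)) - t ≠ 0 := by
        rw [ht, sub_ne_zero]
        exact fun h => hkk (Int.cast_injective h)
      have hne : ((k:ℝ)*((k:ℝ)-t)) ≠ 0 := mul_ne_zero hk' hkk'
      have hy33pos : 0 < y33 := hy33eq ▸ hy33
      exact mul_pos (by linarith) ((sq_nonneg _).lt_of_ne (pow_ne_zero 2 hne).symm)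
    linarith

end Stmt15
end

section
/- Let s ≠ 0 be a real number and let γ = diag(e^s, e^{−s}, 1) ∈ SL(3,ℝ). Let X ∈ 𝒫(3) satisfy (X⁻¹)₁₃ ≠ 0 and (X⁻¹)₂₃ ≠ 0. Then for every nonzero integer k₀ there exists A ∈ 𝒫(3) such that s(γ^{k₀}.X, A) = s(X, A) and s(γᵏ.X, A) > s(X, A) for every integer k ∉ {0, k₀}. (Hence the Dirichlet–Selberg domain of the cyclic group generated by γ centered at such X is infinitely-sided.) -/
open Matrix Real

namespace Stmt16

/-- Membership in `𝒫(3)`: symmetric positive definite of determinant 1. -/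
def PD3 (X : Matrix (Fin 3) (Fin 3) ℝ) : Prop := X.PosDef ∧ X.det = 1

/-- Selberg's invariant `s(X,Y) = tr(X⁻¹·Y)`. -/
noncomputable def sel (X Y : Matrix (Fin 3) (Fin 3) ℝ) : ℝ := (X⁻¹ * Y).trace

/-- The action `g.X = gᵀ·X·g`. -/
def act (g X : Matrix (Fin 3) (Fin 3) ℝ) : Matrix (Fin 3) (Fin 3) ℝ := gᵀ * X * g

/-- The diagonal element `γ = diag(e^s, e^{-s}, 1)`, as a unit of the matrix ring. -/
noncomputable def gam (s : ℝ) : (Matrix (Fin 3) (Fin 3) ℝ)ˣ :=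
  ⟨!![Real.exp s, 0, 0; 0, Real.exp (-s), 0; 0, 0, 1],
    !![Real.exp (-s), 0, 0; 0, Real.exp s, 0; 0, 0, 1],
    by simp [Matrix.mul_fin_three, Matrix.one_fin_three, ← Real.exp_add],
    by simp [Matrix.mul_fin_three, Matrix.one_fin_three, ← Real.exp_add]⟩

lemma gam_zero : gam 0 = 1 := by
  ext : 1
  simp [gam, Matrix.one_fin_three]

lemma gam_mul (a b : ℝ) : gam a * gam b = gam (a + b) := by
  ext : 1
  simp [gam, Matrix.mul_fin_three, ← Real.exp_add]
  ring_nf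

lemma gam_inv (a : ℝ) : (gam a)⁻¹ = gam (-a) := by
  ext : 1
  simp [gam]

lemma gam_zpow (s : ℝ) (k : ℤ) : gam s ^ k = gam (k * s) := by
  induction k using Int.induction_on with
  | zero => simpa using gam_zero.symm
  | succ n ih => rw [_root_.zpow_add_one, ih, gam_mul]; push_cast; ring_nf
  | pred n ih => rw [_root_.zpow_sub_one, ih, gam_inv, gam_mul]; push_cast; ring_nf

lemma gam_transpose (a : ℝ) : ((gam a : Matrix (Fin 3) (Fin 3) ℝ))ᵀ = gam a := by
  ext i j
  fin_cases i <;> fin_cases j <;> simp [gam, Matrix.vecHead, Matrix.vecTail]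

lemma sel_act (t : ℝ) (X A : Matrix (Fin 3) (Fin 3) ℝ) :
    sel (act (↑(gam t)) X) A =
      ((gam (-t) : Matrix (Fin 3) (Fin 3) ℝ) * X⁻¹ * (gam (-t) : Matrix (Fin 3) (Fin 3) ℝ) * A).trace := by
  unfold sel act
  rw [gam_transpose, Matrix.mul_inv_rev, Matrix.mul_inv_rev,
    ← Matrix.coe_units_inv, gam_inv]
  simp [Matrix.mul_assoc]

lemma trace_formula (t : ℝ) (B A : Matrix (Fin 3) (Fin 3) ℝ) :
    ((gam (-t) : Matrix (Fin 3) (Fin 3) ℝ) * B * (gam (-t) : Matrix (Fin 3) (Fin 3) ℝ) * A).trace =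
      exp (-t) * exp (-t) * (B 0 0 * A 0 0) + exp t * exp t * (B 1 1 * A 1 1)
      + B 2 2 * A 2 2 + (B 0 1 * A 1 0 + B 1 0 * A 0 1)
      + exp (-t) * (B 0 2 * A 2 0 + B 2 0 * A 0 2)
      + exp t * (B 1 2 * A 2 1 + B 2 1 * A 1 2) := by
  rw [Matrix.eta_fin_three B, Matrix.eta_fin_three A]
  simp [gam, Matrix.mul_fin_three, Matrix.trace_fin_three, Real.exp_neg]
  field_simp
  ring

lemma diag_pos {M : Matrix (Fin 3) (Fin 3) ℝ} (h : M.PosDef) (i : Fin 3) : 0 < M i i := by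
  have := h.dotProduct_mulVec_pos (x := Pi.single i 1) (by
    intro hc
    have := congrFun hc i
    simp at this)
  simpa [dotProduct, mulVec, Pi.single_apply, Fin.sum_univ_three] using this

lemma key_ineq (u₀ v : ℝ) (hv : v ≠ 0) :
    (u₀ ^ 2 * (v⁻¹ * v⁻¹) + v * v + v⁻¹ * (2 * (-(u₀ * (1 + u₀)))) + v * (2 * (-(1 + u₀))))
      - (u₀ ^ 2 + 1 + 2 * (-(u₀ * (1 + u₀))) + 2 * (-(1 + u₀)))
    = ((v - 1) * (v - u₀)) ^ 2 / v ^ 2 := by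
  field_simp
  ring

lemma aux_posdef (α β p q τ : ℝ) (hα : 0 < α) (hβ : 0 < β)
    (hτab : τ * (α * β) = 1 + α * q ^ 2 + β * p ^ 2) :
    (!![α, 0, p; 0, β, q; p, q, τ]).PosDef := by
  refine Matrix.PosDef.of_dotProduct_mulVec_pos ?_ ?_
  · ext i j
    fin_cases i <;> fin_cases j <;>
      simp [Matrix.conjTranspose_apply, Matrix.vecHead, Matrix.vecTail]
  · intro x hx
    have hx' : x 0 ≠ 0 ∨ x 1 ≠ 0 ∨ x 2 ≠ 0 := by
      by_contra hc
      push_neg at hc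
      apply hx
      funext i
      fin_cases i <;> simp [hc.1, hc.2.1, hc.2.2]
    have hgoal : star x ⬝ᵥ !![α, 0, p; 0, β, q; p, q, τ] *ᵥ x =
        α * (x 0 * x 0) + β * (x 1 * x 1) + τ * (x 2 * x 2)
          + 2 * p * (x 0 * x 2) + 2 * q * (x 1 * x 2) := by
      simp [dotProduct, mulVec, Fin.sum_univ_three, Matrix.vecHead, Matrix.vecTail]
      ring
    rw [hgoal]
    rcases eq_or_ne (x 2) 0 with h2 | h2
    · rw [h2]
      rcases hx' with h0 | h1 | h2'
      · nlinarith [mul_pos hα (mul_self_pos.mpr h0), mul_nonneg hβ.le (mul_self_nonneg (x 1))]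
      · nlinarith [mul_pos hβ (mul_self_pos.mpr h1), mul_nonneg hα.le (mul_self_nonneg (x 0))]
      · exact absurd h2 h2'
    · have hx2 : 0 < x 2 * x 2 := mul_self_pos.mpr h2
      nlinarith [mul_nonneg hβ.le (sq_nonneg (α * x 0 + p * x 2)),
        mul_nonneg hα.le (sq_nonneg (β * x 1 + q * x 2)),
        mul_pos hα hβ, hτab, hx2]

lemma aux_det (α β p q τ : ℝ) (hα : 0 < α) (hβ : 0 < β)
    (hτab : τ * (α * β) = 1 + α * q ^ 2 + β * p ^ 2) :
    (!![α, 0, p; 0, β, q; p, q, τ]).det = 1 := by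
  rw [Matrix.det_fin_three]
  simp [Matrix.vecHead, Matrix.vecTail]
  nlinarith [hτab]


/-- for `γ = diag(e^s, e^{-s}, 1)` with `s ≠ 0` and `X ∈ 𝒫(3)` whose
inverse has nonzero `(1,3)` and `(2,3)` entries, for every nonzero integer `k₀` there
exists `A ∈ 𝒫(3)` whose Selberg invariant to the orbit `γᵏ.X` is minimized exactly at
`k ∈ {0, k₀}`; hence `DS(X, ⟨γ⟩)` is infinitely-sided. -/
theorem cyclic_type_three_prime_infinitely_sided
    (s : ℝ) (hs : s ≠ 0)
    (X : Matrix (Fin 3) (Fin 3) ℝ) (hX : PD3 X)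
    (h13 : (X⁻¹) 0 2 ≠ 0) (h23 : (X⁻¹) 1 2 ≠ 0)
    (k₀ : ℤ) (hk₀ : k₀ ≠ 0) :
    ∃ A : Matrix (Fin 3) (Fin 3) ℝ, PD3 A ∧
      sel (act (↑(gam s ^ k₀)) X) A = sel X A ∧
      ∀ k : ℤ, k ≠ 0 → k ≠ k₀ → sel X A < sel (act (↑(gam s ^ k)) X) A := by
  set B := X⁻¹ with hBdef
  have hB : B.PosDef := hX.1.inv
  have hB00 : 0 < B 0 0 := diag_pos hB 0
  have hB11 : 0 < B 1 1 := diag_pos hB 1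
  have hsym : ∀ i j, B j i = B i j := by
    intro i j
    have := congrFun (congrFun hB.1 i) j
    simpa [Matrix.conjTranspose_apply] using this
  set u₀ : ℝ := exp (k₀ * s) with hu₀def
  have hu₀pos : 0 < u₀ := exp_pos _
  have hu₀ne1 : u₀ ≠ 1 := by
    intro hc
    have hc2 : rexp ((k₀ : ℝ) * s) = rexp 0 := by rw [Real.exp_zero]; exact hc
    have hc' : (k₀ : ℝ) * s = 0 := Real.exp_injective hc2
    exact mul_ne_zero (Int.cast_ne_zero.mpr hk₀ : (k₀:ℝ) ≠ 0) hs hc'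
  set α : ℝ := u₀ ^ 2 / B 0 0 with hαdef
  set β : ℝ := 1 / B 1 1 with hβdef
  set p : ℝ := -(u₀ * (1 + u₀)) / B 0 2 with hpdef
  set q : ℝ := -(1 + u₀) / B 1 2 with hqdef
  set τ : ℝ := (1 + α * q ^ 2 + β * p ^ 2) / (α * β) with hτdef
  have hα : 0 < α := div_pos (by positivity) hB00
  have hβ : 0 < β := div_pos one_pos hB11
  have hτab : τ * (α * β) = 1 + α * q ^ 2 + β * p ^ 2 :=
    div_mul_cancel₀ _ (by positivity)
  set A : Matrix (Fin 3) (Fin 3) ℝ := !![α, 0, p; 0, β, q; p, q, τ] with hAdef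
  have eA00 : A 0 0 = α := rfl
  have eA01 : A 0 1 = 0 := rfl
  have eA02 : A 0 2 = p := rfl
  have eA10 : A 1 0 = 0 := rfl
  have eA11 : A 1 1 = β := rfl
  have eA12 : A 1 2 = q := rfl
  have eA20 : A 2 0 = p := rfl
  have eA21 : A 2 1 = q := rfl
  have eA22 : A 2 2 = τ := rfl
  have hBα : B 0 0 * α = u₀ ^ 2 := by
    rw [hαdef, mul_div_cancel₀ _ hB00.ne']
  have hBβ : B 1 1 * β = 1 := by
    rw [hβdef, mul_one_div, div_self hB11.ne']
  have hBp : B 0 2 * p = -(u₀ * (1 + u₀)) := by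
    rw [hpdef, mul_div_cancel₀ _ h13]
  have hBq : B 1 2 * q = -(1 + u₀) := by
    rw [hqdef, mul_div_cancel₀ _ h23]
  have hform : ∀ t : ℝ, sel (act (↑(gam t)) X) A =
      u₀ ^ 2 * ((exp t)⁻¹ * (exp t)⁻¹) + exp t * exp t
        + τ * B 2 2
        + (exp t)⁻¹ * (2 * (-(u₀ * (1 + u₀)))) + exp t * (2 * (-(1 + u₀))) := by
    intro t
    rw [sel_act, ← hBdef, trace_formula]
    simp only [eA00, eA01, eA02, eA10, eA11, eA12, eA20, eA21, eA22,
      hsym 0 2, hsym 1 2, hBα, hBβ, hBp, hBq, Real.exp_neg]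
    ring
  have hX0 : sel X A = u₀ ^ 2 + 1 + τ * B 2 2
      + 2 * (-(u₀ * (1 + u₀))) + 2 * (-(1 + u₀)) := by
    have h1 : act (↑(gam 0)) X = X := by
      rw [gam_zero]
      simp [act]
    have h2 := hform 0
    rw [h1] at h2
    rw [h2, Real.exp_zero]
    norm_num
  refine ⟨A, ⟨aux_posdef α β p q τ hα hβ hτab, aux_det α β p q τ hα hβ hτab⟩, ?_, ?_⟩
  · rw [gam_zpow, hform, ← hu₀def, hX0]
    have h := key_ineq u₀ u₀ hu₀pos.ne'
    simp only [sub_self, mul_zero, ne_eq, OfNat.ofNat_ne_zero, not_false_eq_true,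
      zero_pow, zero_div] at h
    linarith [h]
  · intro k hk hkk₀
    rw [gam_zpow, hform, hX0]
    set v : ℝ := exp (k * s) with hvdef
    have hvpos : 0 < v := exp_pos _
    have hvne1 : v ≠ 1 := by
      intro hc
      have hc2 : rexp ((k : ℝ) * s) = rexp 0 := by rw [Real.exp_zero]; exact hc
      have hc' : (k : ℝ) * s = 0 := Real.exp_injective hc2
      exact mul_ne_zero (Int.cast_ne_zero.mpr hk : (k:ℝ) ≠ 0) hs hc'
    have hvneu₀ : v ≠ u₀ := by
      intro hc
      have hc' : (k : ℝ) * s = (k₀ : ℝ) * s :=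
        Real.exp_injective (hc : rexp (↑k * s) = rexp (↑k₀ * s))
      exact hkk₀ (Int.cast_injective (mul_right_cancel₀ hs hc'))
    have h := key_ineq u₀ v hvpos.ne'
    have hne : (v - 1) * (v - u₀) ≠ 0 :=
      mul_ne_zero (sub_ne_zero.mpr hvne1) (sub_ne_zero.mpr hvneu₀)
    have hpos : 0 < ((v - 1) * (v - u₀)) ^ 2 / v ^ 2 :=
      div_pos (lt_of_le_of_ne (sq_nonneg _) (Ne.symm (pow_ne_zero 2 hne))) (by positivity)
    linarith [h, hpos]

end Stmt16
end

section
/- Let γ₁ be the 3×3 real matrix with rows (1,0,0), (0,1,1), (0,0,1) and γ₂ the 3×3 real matrix with rows (1,0,1), (0,1,0), (0,0,1); these are commuting unipotent elements of SL(3,ℝ). For every X ∈ 𝒫(3) and every pair of coprime integers (k₀, l₀) (i.e. gcd(k₀,l₀) = 1) there exists A ∈ 𝒫(3) such that s(γ₁^{k₀}γ₂^{l₀}.X, A) = s(X, A) and s(γ₁ᵏγ₂ˡ.X, A) > s(X, A) for every pair of integers (k,l) ∉ {(0,0), (k₀,l₀)}. (Hence the Dirichlet–Selberg domain of the group generated by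 γ₁ and γ₂ centered at any X ∈ 𝒫(3) is infinitely-sided.) -/
open Matrix

namespace Stmt17

/-- Membership in `𝒫(3)`: symmetric positive definite of determinant 1. -/
def PD3 (X : Matrix (Fin 3) (Fin 3) ℝ) : Prop := X.PosDef ∧ X.det = 1

/-- Selberg's invariant `s(X,Y) = tr(X⁻¹·Y)`. -/
noncomputable def sel (X Y : Matrix (Fin 3) (Fin 3) ℝ) : ℝ := (X⁻¹ * Y).trace

/-- The action `g.X = gᵀ·X·g`. -/
def act (g X : Matrix (Fin 3) (Fin 3) ℝ) : Matrix (Fin 3) (Fin 3) ℝ := gᵀ * X * g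

/-- `γ₁` with rows `(1,0,0), (0,1,1), (0,0,1)`, as a unit of the matrix ring. -/
def gam₁ : (Matrix (Fin 3) (Fin 3) ℝ)ˣ :=
  ⟨!![1, 0, 0; 0, 1, 1; 0, 0, 1], !![1, 0, 0; 0, 1, -1; 0, 0, 1],
    by simp [Matrix.mul_fin_three, Matrix.one_fin_three],
    by simp [Matrix.mul_fin_three, Matrix.one_fin_three]⟩

/-- `γ₂` with rows `(1,0,1), (0,1,0), (0,0,1)`, as a unit of the matrix ring. -/
def gam₂ : (Matrix (Fin 3) (Fin 3) ℝ)ˣ :=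
  ⟨!![1, 0, 1; 0, 1, 0; 0, 0, 1], !![1, 0, -1; 0, 1, 0; 0, 0, 1],
    by simp [Matrix.mul_fin_three, Matrix.one_fin_three],
    by simp [Matrix.mul_fin_three, Matrix.one_fin_three]⟩

lemma posdef_aux (A11 A12 A22 al be A33 : ℝ)
    (h11 : 0 < A11) (hdet : A11*A22 - A12^2 = 1)
    (h33 : A33 = A22*al^2 - 2*A12*al*be + A11*be^2 + 1) :
    (!![A11,A12,al;A12,A22,be;al,be,A33]).PosDef ∧
    (!![A11,A12,al;A12,A22,be;al,be,A33]).det = 1 := by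
  constructor
  · rw [Matrix.posDef_iff_dotProduct_mulVec]
    constructor
    · ext i j
      fin_cases i <;> fin_cases j <;> simp [Matrix.conjTranspose_apply]
    · intro x hx
      have key : A11 * (star x ⬝ᵥ (!![A11,A12,al;A12,A22,be;al,be,A33] *ᵥ x)) =
          (A11*x 0 + A12*x 1 + al*x 2)^2 + (x 1 + (A11*be - A12*al)*x 2)^2 + A11*(x 2)^2 := by
        simp [dotProduct, Matrix.mulVec, Fin.sum_univ_three]
        linear_combination ((x 1)^2 + al^2*(x 2)^2)*hdet + A11*(x 2)^2*h33
      by_contra hQ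
      push_neg at hQ
      have hs1 := sq_nonneg (A11*x 0 + A12*x 1 + al*x 2)
      have hs2 := sq_nonneg (x 1 + (A11*be - A12*al)*x 2)
      have h2sq : (x 2)^2 ≤ 0 := by nlinarith
      have h2 : x 2 = 0 := by
        have := le_antisymm h2sq (sq_nonneg _)
        exact sq_eq_zero_iff.mp this
      have h1sq : (x 1 + (A11*be - A12*al)*x 2)^2 ≤ 0 := by nlinarith
      have h1 : x 1 = 0 := by
        have := le_antisymm h1sq (sq_nonneg _)
        have := sq_eq_zero_iff.mp this
        rw [h2] at this; linarith [this]
      have h0sq : (A11*x 0 + A12*x 1 + al*x 2)^2 ≤ 0 := by nlinarith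
      have h0 : x 0 = 0 := by
        have := le_antisymm h0sq (sq_nonneg _)
        have := sq_eq_zero_iff.mp this
        rw [h1, h2] at this
        have h0' : A11 * x 0 = 0 := by linarith [this]
        exact (mul_eq_zero.mp h0').resolve_left (ne_of_gt h11)
      apply hx
      ext i; fin_cases i <;> assumption
  · rw [Matrix.det_fin_three]
    simp
    linear_combination A33*hdet + h33

lemma trace_aux (a b k0 l0 : ℤ) (b11 b12 b13 b22 b23 b33 : ℝ) (hb33 : b33 ≠ 0)
    (A11 A12 A22 al be A33 : ℝ)
    (h11 : A11 = (b:ℝ)^2+(k0:ℝ)^2) (h12 : A12 = (a:ℝ)*(b:ℝ) - (k0:ℝ)*(l0:ℝ))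
    (h22 : A22 = (a:ℝ)^2+(l0:ℝ)^2)
    (hal : al = ((b:ℝ)*b33/2 - b13*A11 - b23*A12)/b33)
    (hbe : be = ((a:ℝ)*b33/2 - b13*A12 - b23*A22)/b33)
    (k l : ℤ) :
    (!![1,0,-(l:ℝ);0,1,-(k:ℝ);0,0,1] * !![b11,b12,b13;b12,b22,b23;b13,b23,b33] *
      !![1,0,0;0,1,0;-(l:ℝ),-(k:ℝ),1] * !![A11,A12,al;A12,A22,be;al,be,A33]).trace
    = (!![b11,b12,b13;b12,b22,b23;b13,b23,b33] * !![A11,A12,al;A12,A22,be;al,be,A33]).trace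
      + b33 * (((a:ℝ)*(k:ℝ)+(b:ℝ)*(l:ℝ))^2 - ((a:ℝ)*(k:ℝ)+(b:ℝ)*(l:ℝ))
          + ((k0:ℝ)*(l:ℝ)-(l0:ℝ)*(k:ℝ))^2) := by
  subst h11 h12 h22 hal hbe
  simp only [Matrix.mul_fin_three, Matrix.trace_fin_three_of]
  field_simp
  ring

lemma coe_gam₁_zpow (k : ℤ) :
    ((gam₁ ^ k : (Matrix (Fin 3) (Fin 3) ℝ)ˣ) : Matrix (Fin 3) (Fin 3) ℝ)
      = !![1,0,0;0,1,(k:ℝ);0,0,1] := by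
  induction k using Int.induction_on with
  | zero => simp [Matrix.one_fin_three]
  | succ n ih =>
      rw [_root_.zpow_add_one, Units.val_mul, ih]
      show _ * (!![1, 0, 0; 0, 1, 1; 0, 0, 1] : Matrix (Fin 3) (Fin 3) ℝ) = _
      rw [Matrix.mul_fin_three]
      ext i j
      fin_cases i <;> fin_cases j <;> push_cast <;> norm_num <;> ring
  | pred n ih =>
      rw [_root_.zpow_sub_one, Units.val_mul, ih]
      show _ * (!![1, 0, 0; 0, 1, -1; 0, 0, 1] : Matrix (Fin 3) (Fin 3) ℝ) = _
      rw [Matrix.mul_fin_three]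
      ext i j
      fin_cases i <;> fin_cases j <;> push_cast <;> norm_num <;> ring

lemma coe_gam₂_zpow (l : ℤ) :
    ((gam₂ ^ l : (Matrix (Fin 3) (Fin 3) ℝ)ˣ) : Matrix (Fin 3) (Fin 3) ℝ)
      = !![1,0,(l:ℝ);0,1,0;0,0,1] := by
  induction l using Int.induction_on with
  | zero => simp [Matrix.one_fin_three]
  | succ n ih =>
      rw [_root_.zpow_add_one, Units.val_mul, ih]
      show _ * (!![1, 0, 1; 0, 1, 0; 0, 0, 1] : Matrix (Fin 3) (Fin 3) ℝ) = _
      rw [Matrix.mul_fin_three]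
      ext i j
      fin_cases i <;> fin_cases j <;> push_cast <;> norm_num <;> ring
  | pred n ih =>
      rw [_root_.zpow_sub_one, Units.val_mul, ih]
      show _ * (!![1, 0, -1; 0, 1, 0; 0, 0, 1] : Matrix (Fin 3) (Fin 3) ℝ) = _
      rw [Matrix.mul_fin_three]
      ext i j
      fin_cases i <;> fin_cases j <;> push_cast <;> norm_num <;> ring

lemma coe_prod (k l : ℤ) :
    ((gam₁ ^ k * gam₂ ^ l : (Matrix (Fin 3) (Fin 3) ℝ)ˣ) : Matrix (Fin 3) (Fin 3) ℝ)
      = !![1,0,(l:ℝ);0,1,(k:ℝ);0,0,1] := by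
  rw [Units.val_mul, coe_gam₁_zpow, coe_gam₂_zpow, Matrix.mul_fin_three]
  norm_num

set_option maxHeartbeats 1600000 in
/-- for every `X ∈ 𝒫(3)` and every coprime pair of integers `(k₀, l₀)`
there exists `A ∈ 𝒫(3)` whose Selberg invariant on the orbit `γ₁ᵏγ₂ˡ.X` is minimized
exactly at `(k,l) ∈ {(0,0), (k₀,l₀)}`; hence `DS(X, ⟨γ₁,γ₂⟩)` is infinitely-sided. -/
theorem two_generated_type_one_prime_infinitely_sided
    (X : Matrix (Fin 3) (Fin 3) ℝ) (hX : PD3 X)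
    (k₀ l₀ : ℤ) (hcop : Int.gcd k₀ l₀ = 1) :
    ∃ A : Matrix (Fin 3) (Fin 3) ℝ, PD3 A ∧
      sel (act (↑(gam₁ ^ k₀ * gam₂ ^ l₀)) X) A = sel X A ∧
      ∀ k l : ℤ, ¬(k = 0 ∧ l = 0) → ¬(k = k₀ ∧ l = l₀) →
        sel X A < sel (act (↑(gam₁ ^ k * gam₂ ^ l)) X) A := by
  obtain ⟨hXpd, hXdet⟩ := hX
  have hXdetU : IsUnit X.det := by rw [hXdet]; exact isUnit_one
  have hXinv : X * X⁻¹ = 1 := Matrix.mul_nonsing_inv X hXdetU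
  have hBpd : (X⁻¹).PosDef := hXpd.inv
  have hsym : ∀ i j, X⁻¹ i j = X⁻¹ j i := by
    intro i j
    have h := hXpd.isHermitian.inv
    conv_lhs => rw [← h]
    simp [Matrix.conjTranspose_apply]
  obtain ⟨b11, hb11⟩ : ∃ t:ℝ, X⁻¹ 0 0 = t := ⟨_, rfl⟩
  obtain ⟨b12, hb12⟩ : ∃ t:ℝ, X⁻¹ 0 1 = t := ⟨_, rfl⟩
  obtain ⟨b13, hb13⟩ : ∃ t:ℝ, X⁻¹ 0 2 = t := ⟨_, rfl⟩
  obtain ⟨b22, hb22⟩ : ∃ t:ℝ, X⁻¹ 1 1 = t := ⟨_, rfl⟩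
  obtain ⟨b23, hb23⟩ : ∃ t:ℝ, X⁻¹ 1 2 = t := ⟨_, rfl⟩
  obtain ⟨b33, hb33⟩ : ∃ t:ℝ, X⁻¹ 2 2 = t := ⟨_, rfl⟩
  have hBmat : X⁻¹ = !![b11,b12,b13;b12,b22,b23;b13,b23,b33] := by
    ext i j
    fin_cases i <;> fin_cases j <;>
      simp [hsym 1 0, hsym 2 0, hsym 2 1, hb11, hb12, hb13, hb22, hb23, hb33]
  have hb33pos : 0 < b33 := by
    rw [← hb33]
    have hne : (Pi.single 2 1 : Fin 3 → ℝ) ≠ 0 := by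
      intro h
      have := congrFun h 2
      simp [Pi.single_apply] at this
    have := hBpd.dotProduct_mulVec_pos hne
    simpa [dotProduct, Matrix.mulVec, Fin.sum_univ_three, Pi.single_apply] using this
  have hb33ne : b33 ≠ 0 := ne_of_gt hb33pos
  obtain ⟨a, b, hbez⟩ : ∃ a b : ℤ, a*k₀ + b*l₀ = 1 := by
    refine ⟨Int.gcdA k₀ l₀, Int.gcdB k₀ l₀, ?_⟩
    have h := Int.gcd_eq_gcd_ab k₀ l₀
    rw [hcop] at h
    push_cast at h
    linear_combination -h
  have hbezR : (a:ℝ) * (k₀:ℝ) + (b:ℝ) * (l₀:ℝ) = 1 := by exact_mod_cast hbez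
  obtain ⟨A11, hA11⟩ : ∃ t:ℝ, t = (b:ℝ)^2 + (k₀:ℝ)^2 := ⟨_, rfl⟩
  obtain ⟨A12, hA12⟩ : ∃ t:ℝ, t = (a:ℝ)*(b:ℝ) - (k₀:ℝ)*(l₀:ℝ) := ⟨_, rfl⟩
  obtain ⟨A22, hA22⟩ : ∃ t:ℝ, t = (a:ℝ)^2 + (l₀:ℝ)^2 := ⟨_, rfl⟩
  obtain ⟨al, hal⟩ : ∃ t:ℝ, t = ((b:ℝ)*b33/2 - b13*A11 - b23*A12)/b33 := ⟨_, rfl⟩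
  obtain ⟨be, hbe⟩ : ∃ t:ℝ, t = ((a:ℝ)*b33/2 - b13*A12 - b23*A22)/b33 := ⟨_, rfl⟩
  obtain ⟨A33, hA33⟩ : ∃ t:ℝ, t = A22*al^2 - 2*A12*al*be + A11*be^2 + 1 := ⟨_, rfl⟩
  have h11pos : 0 < A11 := by
    rw [hA11]
    have hbk : b ≠ 0 ∨ k₀ ≠ 0 := by
      by_contra h
      push_neg at h
      rw [h.1, h.2] at hbez
      simp at hbez
    rcases hbk with h | h
    · have h' : ((b:ℝ)) ≠ 0 := Int.cast_ne_zero.mpr h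
      nlinarith [pow_two_pos_of_ne_zero h', sq_nonneg ((k₀:ℝ))]
    · have h' : ((k₀:ℝ)) ≠ 0 := Int.cast_ne_zero.mpr h
      nlinarith [pow_two_pos_of_ne_zero h', sq_nonneg ((b:ℝ))]
  have hdetC : A11*A22 - A12^2 = 1 := by
    rw [hA11, hA12, hA22]
    linear_combination ((a:ℝ)*(k₀:ℝ) + (b:ℝ)*(l₀:ℝ) + 1) * hbezR
  obtain ⟨hApd, hAdet⟩ := posdef_aux A11 A12 A22 al be A33 h11pos hdetC hA33
  have main : ∀ k l : ℤ,
      sel (act (↑(gam₁ ^ k * gam₂ ^ l)) X) !![A11,A12,al;A12,A22,be;al,be,A33]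
        = sel X !![A11,A12,al;A12,A22,be;al,be,A33]
          + b33 * (((a:ℝ)*(k:ℝ)+(b:ℝ)*(l:ℝ))^2 - ((a:ℝ)*(k:ℝ)+(b:ℝ)*(l:ℝ))
              + ((k₀:ℝ)*(l:ℝ)-(l₀:ℝ)*(k:ℝ))^2) := by
    intro k l
    rw [coe_prod]
    have hgT : (!![1,0,(l:ℝ);0,1,(k:ℝ);0,0,1] : Matrix (Fin 3) (Fin 3) ℝ)ᵀ
        = !![1,0,0;0,1,0;(l:ℝ),(k:ℝ),1] := by
      ext i j; fin_cases i <;> fin_cases j <;> rfl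
    have h1 : (!![1,0,(l:ℝ);0,1,(k:ℝ);0,0,1] : Matrix (Fin 3) (Fin 3) ℝ)
        * !![1,0,-(l:ℝ);0,1,-(k:ℝ);0,0,1] = 1 := by
      rw [Matrix.mul_fin_three, Matrix.one_fin_three]
      norm_num
    have h2 : (!![1,0,0;0,1,0;(l:ℝ),(k:ℝ),1] : Matrix (Fin 3) (Fin 3) ℝ)
        * !![1,0,0;0,1,0;-(l:ℝ),-(k:ℝ),1] = 1 := by
      rw [Matrix.mul_fin_three, Matrix.one_fin_three]
      norm_num
    have hinv : (!![1,0,0;0,1,0;(l:ℝ),(k:ℝ),1] * X * !![1,0,(l:ℝ);0,1,(k:ℝ);0,0,1])⁻¹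
        = !![1,0,-(l:ℝ);0,1,-(k:ℝ);0,0,1] * X⁻¹ * !![1,0,0;0,1,0;-(l:ℝ),-(k:ℝ),1] := by
      apply Matrix.inv_eq_right_inv
      calc (!![1,0,0;0,1,0;(l:ℝ),(k:ℝ),1] * X * !![1,0,(l:ℝ);0,1,(k:ℝ);0,0,1])
            * (!![1,0,-(l:ℝ);0,1,-(k:ℝ);0,0,1] * X⁻¹ * !![1,0,0;0,1,0;-(l:ℝ),-(k:ℝ),1])
          = !![1,0,0;0,1,0;(l:ℝ),(k:ℝ),1] * ((X * (!![1,0,(l:ℝ);0,1,(k:ℝ);0,0,1]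
              * !![1,0,-(l:ℝ);0,1,-(k:ℝ);0,0,1])) * X⁻¹) * !![1,0,0;0,1,0;-(l:ℝ),-(k:ℝ),1] := by
            simp only [Matrix.mul_assoc]
        _ = 1 := by rw [h1, mul_one, hXinv, mul_one, h2]
    simp only [sel, act]
    rw [hgT, hinv, hBmat]
    exact trace_aux a b k₀ l₀ b11 b12 b13 b22 b23 b33 hb33ne A11 A12 A22 al be A33
      hA11 hA12 hA22 hal hbe k l
  refine ⟨!![A11,A12,al;A12,A22,be;al,be,A33], ⟨hApd, hAdet⟩, ?_, ?_⟩
  · rw [main k₀ l₀]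
    linear_combination (b33 * ((a:ℝ)*(k₀:ℝ) + (b:ℝ)*(l₀:ℝ))) * hbezR
  · intro k l hkl0 hkl1
    rw [main k l]
    have hk' : k = k₀*(a*k+b*l) - b*(k₀*l - l₀*k) := by linear_combination (-k) * hbez
    have hl' : l = l₀*(a*k+b*l) + a*(k₀*l - l₀*k) := by linear_combination (-l) * hbez
    have hpos : 0 < (a*k+b*l)^2 - (a*k+b*l) + (k₀*l - l₀*k)^2 := by
      obtain ⟨u, hu⟩ : ∃ t:ℤ, a*k+b*l = t := ⟨_, rfl⟩
      obtain ⟨v, hv⟩ : ∃ t:ℤ, k₀*l - l₀*k = t := ⟨_, rfl⟩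
      rw [hu, hv] at hk' hl' ⊢
      have huu : 0 ≤ u*(u-1) := by
        rcases le_or_gt u 0 with h|h
        · nlinarith
        · nlinarith
      rcases eq_or_ne v 0 with hv0|hv0
      · subst hv0
        have hu0 : u ≠ 0 := by
          intro h; subst h; exact hkl0 ⟨by omega, by omega⟩
        have hu1 : u ≠ 1 := by
          intro h; subst h; exact hkl1 ⟨by omega, by omega⟩
        have hcase : u ≤ -1 ∨ 2 ≤ u := by omega
        rcases hcase with h|h <;> nlinarith
      · have h1v : 1 ≤ v^2 := by
          have hcase : v ≤ -1 ∨ 1 ≤ v := by omega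
          rcases hcase with h|h <;> nlinarith
        nlinarith
    have hR : (0:ℝ) < (((a*k+b*l)^2 - (a*k+b*l) + (k₀*l-l₀*k)^2 : ℤ) : ℝ) := by
      exact_mod_cast hpos
    push_cast at hR
    have hposR : (0:ℝ) < ((a:ℝ)*(k:ℝ)+(b:ℝ)*(l:ℝ))^2 - ((a:ℝ)*(k:ℝ)+(b:ℝ)*(l:ℝ))
        + ((k₀:ℝ)*(l:ℝ)-(l₀:ℝ)*(k:ℝ))^2 := by linarith [hR]
    linarith [mul_pos hb33pos hposR]

end Stmt17
end
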